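/- arXiv:1302.5038 — 5 statements merged into one kernel-verified Lean document; each statement's English description precedes it below -/
import Mathlib

section
/- For every integer m > 5, the complete bipartite graph K_{m,2m} cannot have its vertex set covered by at most 2 vertex-disjoint paths. -/
open SimpleGraph

/-- The deletion of a vertex set `S` leaves a connected graph. -/
def DeleteConnected {V : Type*} (G : SimpleGraph V) (S : Set V) : Prop :=
  ((⊤ : G.Subgraph).deleteVerts S).coe.Connected

/-- `G` is `k`-connected: more than `k` vertices, and removing fewer than `k`
vertices leaves a connected graph. -/
def IsKConnected {V : Type*} (G : SimpleGraph V) (k : ℕ) : Prop :=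
  k < Nat.card V ∧ ∀ S : Set V, S.ncard < k → DeleteConnected G S

/-- The vertex connectivity `κ(G)`. -/
noncomputable def kappa {V : Type*} (G : SimpleGraph V) : ℕ := sSup {k | IsKConnected G k}

/-- The independence number `α(G)`. -/
noncomputable def indepNum {V : Type*} (G : SimpleGraph V) : ℕ :=
  sSup {n | ∃ s : Set V, (∀ a ∈ s, ∀ b ∈ s, ¬ G.Adj a b) ∧ s.ncard = n}

/-- The branch vertices of a graph: the vertices of degree more than `2`. -/
def branchVerts {V : Type*} (T : SimpleGraph V) : Set V := {v | 2 < (T.neighborSet v).ncard}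

/-- `s(G)`: the minimum number of branch vertices over all spanning trees of `G`. -/
noncomputable def sBranch {V : Type*} (G : SimpleGraph V) : ℕ :=
  sInf {n | ∃ T : SimpleGraph V, T ≤ G ∧ T.IsTree ∧ (branchVerts T).ncard = n}

/-- `T` is a spanning generalized caterpillar of `G`: a spanning tree all of whose
branch vertices lie on a single path. -/
def IsSGCof {V : Type*} (G T : SimpleGraph V) : Prop :=
  T ≤ G ∧ T.IsTree ∧
    ∃ (u v : V) (p : T.Walk u v), p.IsPath ∧ ∀ w ∈ branchVerts T, w ∈ p.support

/-- `G` has a spanning generalized caterpillar. -/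
def HasSGC {V : Type*} (G : SimpleGraph V) : Prop := ∃ T, IsSGCof G T

/-- The vertices of `G` can be covered by `n` pairwise vertex-disjoint paths. -/
def HasPathCover {V : Type*} (G : SimpleGraph V) (n : ℕ) : Prop :=
  ∃ (u v : Fin n → V) (p : ∀ i, G.Walk (u i) (v i)),
    (∀ i, (p i).IsPath) ∧
    (∀ i j, i ≠ j → ∀ x, x ∈ (p i).support → x ∉ (p j).support) ∧
    (∀ x, ∃ i, x ∈ (p i).support)

/-- The construction of Theorem 2: an independent set `S` of size `m` together with
`m + 2` copies of `K_{2m+1,m}` with parts `B i` (size `2m+1`) and `A i` (size `m`);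
the chosen vertices `t i j` are the first `m` vertices of `B i`, each joined to all of `S`. -/
def ConstructionGraph (m : ℕ) :
    SimpleGraph (Fin m ⊕ (Fin (m + 2) × (Fin (2 * m + 1) ⊕ Fin m))) :=
  SimpleGraph.fromRel (fun x y =>
    match x, y with
    | Sum.inr ⟨i, Sum.inl _⟩, Sum.inr ⟨i', Sum.inr _⟩ => i = i'
    | Sum.inl _, Sum.inr ⟨_, Sum.inl b⟩ => (b : ℕ) < m
    | _, _ => False)


lemma alt_count {V : Type*} {G : SimpleGraph V} (q : V → Bool)
    (hq : ∀ a b, G.Adj a b → q a ≠ q b) {u v : V} (p : G.Walk u v) :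
    (p.support.countP (fun x => q x == q u)) ≤ (p.support.countP (fun x => q x != q u)) + 1 ∧
    (p.support.countP (fun x => q x != q u)) ≤ (p.support.countP (fun x => q x == q u)) := by
  induction p with
  | nil => simp
  | @cons a b c h p ih =>
    have hab := hq a b h
    rw [SimpleGraph.Walk.support_cons, List.countP_cons, List.countP_cons]
    cases ha : q a <;> cases hb : q b <;> simp_all

lemma alt_count' {V : Type*} {G : SimpleGraph V} (q : V → Bool)
    (hq : ∀ a b, G.Adj a b → q a ≠ q b) {u v : V} (p : G.Walk u v) :
    (p.support.countP (fun x => !q x)) ≤ (p.support.countP (fun x => q x)) + 1 := by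
  have h := alt_count q hq p
  have e1 : (fun x => q x == false) = (fun x => !q x) := by funext x; cases q x <;> simp
  have e2 : (fun x => q x != false) = (fun x => q x) := by funext x; cases q x <;> simp
  have e3 : (fun x => q x == true) = (fun x => q x) := by funext x; cases q x <;> simp
  have e4 : (fun x => q x != true) = (fun x => !q x) := by funext x; cases q x <;> simp
  cases hu : q u <;> rw [hu] at h
  · rw [e1, e2] at h; omega
  · rw [e3, e4] at h; omega

/-- For every integer `m > 5`, the complete bipartite graph `K_{m,2m}` cannot have its
vertex set covered by at most two vertex-disjoint paths. -/
theorem stmt0 (m : ℕ) (hm : 5 < m) (n : ℕ) (hn : n ≤ 2) :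
    ¬ HasPathCover (completeBipartiteGraph (Fin m) (Fin (2 * m))) n := by
  rintro ⟨u, v, p, hp, hdisj, hcov⟩
  have hq : ∀ a b : Fin m ⊕ Fin (2*m),
      (completeBipartiteGraph (Fin m) (Fin (2 * m))).Adj a b →
      Sum.isLeft a ≠ Sum.isLeft b := by
    rintro (a|a) (b|b) hab <;> simp_all
  set A : Fin n → ℕ := fun i => (p i).support.countP (fun x => Sum.isLeft x) with hA'
  set B : Fin n → ℕ := fun i => (p i).support.countP (fun x => !Sum.isLeft x) with hB'
  have hBA : ∀ i, B i ≤ A i + 1 := fun i => alt_count' _ hq (p i)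
  set F : Fin n → Finset (Fin m ⊕ Fin (2*m)) :=
    fun i => ((p i).support.filter (fun x => Sum.isLeft x)).toFinset with hF'
  set F' : Fin n → Finset (Fin m ⊕ Fin (2*m)) :=
    fun i => ((p i).support.filter (fun x => !Sum.isLeft x)).toFinset with hF''
  have hFcard : ∀ i, (F i).card = A i := by
    intro i
    rw [hF', hA']
    rw [List.toFinset_card_of_nodup ((hp i).support_nodup.filter _)]
    exact List.countP_eq_length_filter.symm
  have hF'card : ∀ i, (F' i).card = B i := by
    intro i
    rw [hF'', hB']
    rw [List.toFinset_card_of_nodup ((hp i).support_nodup.filter _)]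
    exact List.countP_eq_length_filter.symm
  have hdF : ∀ i ∈ Finset.univ, ∀ j ∈ Finset.univ, i ≠ j → Disjoint (F i) (F j) := by
    intro i _ j _ hij
    rw [Finset.disjoint_left]
    intro x hx hx'
    simp only [hF', List.mem_toFinset, List.mem_filter] at hx hx'
    exact hdisj i j hij x hx.1 hx'.1
  have hdF' : ∀ i ∈ Finset.univ, ∀ j ∈ Finset.univ, i ≠ j → Disjoint (F' i) (F' j) := by
    intro i _ j _ hij
    rw [Finset.disjoint_left]
    intro x hx hx'
    simp only [hF'', List.mem_toFinset, List.mem_filter] at hx hx'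
    exact hdisj i j hij x hx.1 hx'.1
  have hsumA : ∑ i, A i ≤ m := by
    have h1 : (Finset.univ.biUnion F).card = ∑ i, A i := by
      rw [Finset.card_biUnion hdF]; exact Finset.sum_congr rfl (fun i _ => hFcard i)
    rw [← h1]
    have : (Finset.univ.biUnion F).card ≤ (Finset.univ : Finset (Fin m)).card := by
      apply Finset.card_le_card_of_injOn (Sum.elim id (fun _ => ⟨0, by omega⟩))
      · intro x _; exact Finset.mem_univ _
      · intro x hx y hy hxy
        simp only [Finset.mem_coe, Finset.mem_biUnion, hF', List.mem_toFinset, List.mem_filter] at hx hy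
        obtain ⟨i, _, hxl⟩ := hx
        obtain ⟨j, _, hyl⟩ := hy
        obtain ⟨a, rfl⟩ := Sum.isLeft_iff.mp hxl.2
        obtain ⟨b, rfl⟩ := Sum.isLeft_iff.mp hyl.2
        simpa using hxy
    simpa using this
  have hsumB : 2 * m ≤ ∑ i, B i := by
    have h1 : (Finset.univ.biUnion F').card = ∑ i, B i := by
      rw [Finset.card_biUnion hdF']; exact Finset.sum_congr rfl (fun i _ => hF'card i)
    rw [← h1]
    have hsub : Finset.univ.image (Sum.inr : Fin (2*m) → Fin m ⊕ Fin (2*m)) ⊆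
        Finset.univ.biUnion F' := by
      intro x hx
      simp only [Finset.mem_image] at hx
      obtain ⟨b, _, rfl⟩ := hx
      obtain ⟨i, hi⟩ := hcov (Sum.inr b)
      simp only [Finset.mem_biUnion, hF'', List.mem_toFinset, List.mem_filter]
      exact ⟨i, Finset.mem_univ _, hi, by simp⟩
    have := Finset.card_le_card hsub
    rwa [Finset.card_image_of_injective _ Sum.inr_injective, Finset.card_univ,
      Fintype.card_fin] at this
  have hsum : ∑ i, B i ≤ ∑ i, A i + n := by
    calc ∑ i, B i ≤ ∑ i, (A i + 1) := Finset.sum_le_sum (fun i _ => hBA i)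
    _ = ∑ i, A i + n := by rw [Finset.sum_add_distrib]; simp
  omega
end

section
/- Let G be a connected graph and suppose G has a spanning tree T with at most κ(G) branch vertices (vertices of degree more than 2 in T), where κ(G) is the vertex connectivity of G. Then G has a spanning generalized caterpillar, i.e., a spanning tree in which all vertices of degree more than 2 lie on a single path. -/
open SimpleGraph

namespace SGCaux

variable {V : Type*} {G : SimpleGraph V}

/-- Junction lemma: appending two paths that share only the junction vertex. -/
lemma isPath_append {u v w : V} {p : G.Walk u v} {q : G.Walk v w}
    (hp : p.IsPath) (hq : q.IsPath)
    (h : ∀ y, y ∈ p.support → y ∈ q.support → y = v) : (p.append q).IsPath := by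
  rw [Walk.isPath_def, Walk.support_append, List.nodup_append]
  refine ⟨hp.support_nodup, ?_, ?_⟩
  · have := hq.support_nodup
    rw [q.support_eq_cons] at this
    exact this.of_cons
  · intro y hy y' hy' hyy'
    subst hyy'
    have hyq : y ∈ q.support := List.mem_of_mem_tail hy'
    have : y = v := h y hy hyq
    subst this
    have := hq.support_nodup
    rw [q.support_eq_cons] at this
    exact (List.nodup_cons.mp this).1 hy'

/-- First hit of a set along a walk. -/
lemma exists_firstHit {S : Set V} :
    ∀ {a b : V} (w : G.Walk a b), (∃ y ∈ w.support, y ∈ S) →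
    ∃ (c : V) (w' : G.Walk a c), c ∈ S ∧
      (∀ y ∈ w'.support, y ∈ w.support) ∧
      (∀ e ∈ w'.edges, e ∈ w.edges) ∧
      (∀ y ∈ w'.support, y ∈ S → y = c) ∧
      (w.IsPath → w'.IsPath) := by
  intro a b w
  induction w with
  | nil =>
    rintro ⟨y, hy, hyS⟩
    simp only [Walk.support_nil, List.mem_singleton] at hy
    subst hy
    exact ⟨y, Walk.nil, hyS, by simp, by simp, by simp, fun _ => Walk.IsPath.nil⟩
  | @cons a a' b h rest ih =>
    intro hS
    by_cases haS : a ∈ S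
    · exact ⟨a, Walk.nil, haS, by simp, by simp, by simp_all, fun _ => Walk.IsPath.nil⟩
    · have hS' : ∃ y ∈ rest.support, y ∈ S := by
        obtain ⟨y, hy, hyS⟩ := hS
        rw [Walk.support_cons, List.mem_cons] at hy
        rcases hy with rfl | hy
        · exact absurd hyS haS
        · exact ⟨y, hy, hyS⟩
      obtain ⟨c, w', hcS, hsub, hesub, honly, hpath⟩ := ih hS'
      refine ⟨c, Walk.cons h w', hcS, ?_, ?_, ?_, ?_⟩
      · intro y hy
        rw [Walk.support_cons, List.mem_cons] at hy ⊢
        exact hy.imp id (fun hy => hsub y hy)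
      · intro e he
        rw [Walk.edges_cons, List.mem_cons] at he ⊢
        exact he.imp id (fun he => hesub e he)
      · intro y hy hyS
        rw [Walk.support_cons, List.mem_cons] at hy
        rcases hy with rfl | hy
        · exact absurd hyS haS
        · exact honly y hy hyS
      · intro hwp
        rw [Walk.cons_isPath_iff] at hwp ⊢
        exact ⟨hpath hwp.1, fun hc => hwp.2 (hsub a hc)⟩

/-- Prefix of a path up to an interior vertex avoids the endpoint. -/
lemma exists_path_prefix {a c : V} (p : G.Walk a c) (hp : p.IsPath) {z : V}
    (hz : z ∈ p.support) (hzc : z ≠ c) :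
    ∃ q : G.Walk a z, q.IsPath ∧ (∀ y ∈ q.support, y ∈ p.support) ∧ c ∉ q.support := by
  induction p with
  | nil =>
    simp only [Walk.support_nil, List.mem_singleton] at hz
    exact absurd hz hzc
  | @cons a a' b h rest ih =>
    rw [Walk.cons_isPath_iff] at hp
    rw [Walk.support_cons, List.mem_cons] at hz
    by_cases hza : z = a
    · subst hza
      refine ⟨Walk.nil, Walk.IsPath.nil, by simp, ?_⟩
      simp only [Walk.support_nil, List.mem_singleton]
      intro hca
      exact hp.2 (hca ▸ rest.end_mem_support)
    · have hz' : z ∈ rest.support := by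
        rcases hz with rfl | hz
        · exact absurd rfl hza
        · exact hz
      obtain ⟨q, hq, hsub, hcq⟩ := ih hp.1 hz' hzc
      refine ⟨Walk.cons h q, ?_, ?_, ?_⟩
      · rw [Walk.cons_isPath_iff]
        exact ⟨hq, fun hc => hp.2 (hsub a hc)⟩
      · intro y hy
        rw [Walk.support_cons, List.mem_cons] at hy ⊢
        exact hy.imp id (fun hy => hsub y hy)
      · rw [Walk.support_cons, List.mem_cons]
        rintro (rfl | hc)
        · exact hp.2 rest.end_mem_support
        · exact hcq hc

/-- Suffix of a path from an interior vertex avoids the start. -/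
lemma exists_path_suffix {a c : V} (p : G.Walk a c) (hp : p.IsPath) {z : V}
    (hz : z ∈ p.support) (hza : z ≠ a) :
    ∃ q : G.Walk z c, q.IsPath ∧ (∀ y ∈ q.support, y ∈ p.support) ∧ a ∉ q.support := by
  obtain ⟨q, hq, hsub, hnot⟩ := exists_path_prefix p.reverse hp.reverse
    (by rwa [Walk.support_reverse, List.mem_reverse]) hza
  refine ⟨q.reverse, hq.reverse, ?_, ?_⟩
  · intro y hy
    rw [Walk.support_reverse, List.mem_reverse] at hy
    have := hsub y hy
    rwa [Walk.support_reverse, List.mem_reverse] at this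
  · rwa [Walk.support_reverse, List.mem_reverse]


lemma pendant_acyclic {H : SimpleGraph V} (hH : H.IsAcyclic) {w z : V} (hwz : w ≠ z)
    (hz : ∀ q, ¬ H.Adj z q) : (H ⊔ fromEdgeSet {s(w, z)}).IsAcyclic := by
  classical
  intro a c hc
  have hadjz : ∀ q, (H ⊔ fromEdgeSet {s(w, z)}).Adj z q → q = w := by
    intro q hq
    rw [sup_adj, fromEdgeSet_adj] at hq
    rcases hq with hq | hq
    · exact absurd hq (hz q)
    · simp only [Set.mem_singleton_iff, Sym2.eq, Sym2.rel_iff', Prod.mk.injEq,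
        Prod.swap_prod_mk] at hq
      rcases hq.1 with ⟨h1, h2⟩ | ⟨h1, h2⟩
      · exact h2.trans h1
      · exact h2
  by_cases hzs : z ∈ c.support
  · obtain ⟨q, hq⟩ : ∃ q : (H ⊔ fromEdgeSet {s(w, z)}).Walk z z, q.IsCycle :=
      ⟨c.rotate _ hzs, hc.rotate hzs⟩
    cases q with
    | nil => exact ((Walk.isCycle_def _).mp hq).2.1 rfl
    | cons h' rest =>
      rename_i x
      obtain rfl : w = x := (hadjz x h').symm
      have hwzne : ¬ (w = z) := hwz
      obtain ⟨y, hy, rest', hrest'⟩ := Walk.exists_eq_cons_of_ne (fun hh => hwz hh.symm)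
        rest.reverse
      obtain rfl : w = y := (hadjz y hy).symm
      have hmem : s(z, w) ∈ rest.edges := by
        have h2 : s(z, w) ∈ rest.reverse.edges := by rw [hrest']; simp
        rwa [Walk.edges_reverse, List.mem_reverse] at h2
      have hnodup := hq.edges_nodup
      rw [Walk.edges_cons, List.nodup_cons] at hnodup
      exact hnodup.1 hmem
  · have hedges : ∀ e ∈ c.edges, e ∈ H.edgeSet := by
      intro e he
      have h3 : e ∈ (H ⊔ fromEdgeSet {s(w, z)}).edgeSet := c.edges_subset_edgeSet he
      rw [edgeSet_sup] at h3
      rcases h3 with h1 | h1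
      · exact h1
      · exfalso
        rw [edgeSet_fromEdgeSet] at h1
        have h4 : e = s(w, z) := h1.1
        subst h4
        exact hzs (Walk.snd_mem_support_of_mem_edges c he)
    refine hH (c.transfer H hedges) ?_
    rw [Walk.isCycle_def]
    rw [Walk.isCycle_def] at hc
    refine ⟨?_, ?_, ?_⟩
    · rw [Walk.isTrail_def, Walk.edges_transfer]
      exact hc.1.edges_nodup
    · intro hn
      apply hc.2.1
      have h5 : c.length = 0 := by
        rw [← Walk.length_transfer c hedges, hn, Walk.length_nil]
      exact Walk.Nil.eq_nil (Walk.nil_iff_length_eq.mpr h5)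
    · rw [Walk.support_transfer]
      exact hc.2.2

/-- Building the base path graph. -/
lemma base_graph {u v : V} (P : G.Walk u v) (hP : P.IsPath) :
    ∃ H : SimpleGraph V, H ≤ G ∧ H.IsAcyclic ∧
      (∀ p q, H.Adj p q → p ∈ P.support ∧ q ∈ P.support) ∧
      (∀ y ∈ P.support, H.Reachable u y) ∧
      (∀ e ∈ P.edges, e ∈ H.edgeSet) := by
  classical
  induction P with
  | nil =>
    exact ⟨⊥, bot_le, isAcyclic_bot, by simp, by simp, by simp⟩
  | @cons a s b h rest ih =>
    rw [Walk.cons_isPath_iff] at hP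
    obtain ⟨H, hHG, hacy, hin, hreach, hedges⟩ := ih hP.1
    refine ⟨H ⊔ fromEdgeSet {s(s, a)}, ?_, ?_, ?_, ?_, ?_⟩
    · refine sup_le hHG ?_
      intro p q hpq
      rw [fromEdgeSet_adj] at hpq
      simp only [Set.mem_singleton_iff, Sym2.eq, Sym2.rel_iff', Prod.mk.injEq,
        Prod.swap_prod_mk] at hpq
      rcases hpq.1 with ⟨rfl, rfl⟩ | ⟨rfl, rfl⟩
      · exact h.symm
      · exact h
    · refine pendant_acyclic hacy ?_ ?_
      · intro hsa; exact hP.2 (hsa ▸ rest.start_mem_support)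
      · intro q hq
        exact hP.2 (hin a q hq).1
    · intro p q hpq
      rcases hpq with hpq | hpq
      · obtain ⟨h1, h2⟩ := hin p q hpq
        exact ⟨List.mem_cons_of_mem _ h1, List.mem_cons_of_mem _ h2⟩
      · rw [fromEdgeSet_adj] at hpq
        simp only [Set.mem_singleton_iff, Sym2.eq, Sym2.rel_iff', Prod.mk.injEq,
          Prod.swap_prod_mk] at hpq
        rcases hpq.1 with ⟨rfl, rfl⟩ | ⟨rfl, rfl⟩
        · exact ⟨List.mem_cons_of_mem _ rest.start_mem_support, List.mem_cons_self⟩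
        · exact ⟨List.mem_cons_self, List.mem_cons_of_mem _ rest.start_mem_support⟩
    · intro y hy
      have hadj : (H ⊔ fromEdgeSet {s(s, a)}).Adj a s := by
        rw [sup_adj]
        right
        rw [fromEdgeSet_adj]
        constructor
        · rw [Set.mem_singleton_iff, Sym2.eq_swap]
        · intro haa; exact hP.2 (haa ▸ rest.start_mem_support)
      rw [Walk.support_cons, List.mem_cons] at hy
      rcases hy with rfl | hy
      · exact Reachable.refl _
      · exact (hadj.reachable).trans ((hreach y hy).mono le_sup_left)
    · intro e he
      rw [Walk.edges_cons, List.mem_cons] at he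
      rcases he with rfl | he
      · rw [edgeSet_sup]
        right
        rw [edgeSet_fromEdgeSet]
        refine ⟨by rw [Set.mem_singleton_iff, Sym2.eq_swap], ?_⟩
        simp only [Set.mem_setOf_eq, Sym2.mem_diagSet, Sym2.isDiag_iff_proj_eq]
        intro hsa; exact hP.2 (hsa ▸ rest.start_mem_support)
      · rw [edgeSet_sup]; exact Or.inl (hedges e he)


/-- `S` separates `A` from `B` in `G`. -/
def Sep (G : SimpleGraph V) (A B S : Set V) : Prop :=
  ∀ ⦃a b : V⦄, a ∈ A → b ∈ B → ∀ w : G.Walk a b, ∃ s ∈ S, s ∈ w.support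

/-- A system of `k` pairwise disjoint `A`-`B` paths. -/
structure PSys (G : SimpleGraph V) (A B : Set V) (k : ℕ) where
  a : Fin k → V
  b : Fin k → V
  w : ∀ i, G.Walk (a i) (b i)
  ha : ∀ i, a i ∈ A
  hb : ∀ i, b i ∈ B
  hpath : ∀ i, (w i).IsPath
  hdisj : ∀ i j, i ≠ j → ∀ y, y ∈ (w i).support → y ∉ (w j).support

lemma support_mapLe {G' : SimpleGraph V} (h : G ≤ G') {u v : V} (p : G.Walk u v) :
    (p.mapLe h).support = p.support := by
  simp only [Walk.mapLe, Walk.support_map, Hom.coe_ofLE]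
  convert List.map_id p.support

lemma edges_mapLe {G' : SimpleGraph V} (h : G ≤ G') {u v : V} (p : G.Walk u v) :
    (p.mapLe h).edges = p.edges := by
  simp only [Walk.mapLe, Walk.edges_map, Hom.coe_ofLE]
  have h2 : ∀ e : Sym2 V, Sym2.map id e = id e := by
    intro e
    induction e with
    | _ x y => rfl
  rw [List.map_congr_left (fun e _ => h2 e)]
  convert List.map_id p.edges

lemma exists_inj_of_le_ncard [Fintype V] {S : Set V} {k : ℕ} (h : k ≤ S.ncard) :
    ∃ f : Fin k → V, Function.Injective f ∧ ∀ i, f i ∈ S := by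
  classical
  have hfin : S.Finite := S.toFinite
  rw [Set.ncard_eq_toFinset_card _ hfin] at h
  obtain ⟨t, hts, htc⟩ := Finset.exists_subset_card_eq h
  let e := Finset.equivFinOfCardEq htc
  refine ⟨fun i => (e.symm i : V), ?_, ?_⟩
  · intro i j hij
    apply e.symm.injective
    exact Subtype.ext hij
  · intro i
    have := (e.symm i).2
    exact hfin.mem_toFinset.mp (hts this)

lemma surj_of_inj_ncard [Fintype V] {S : Set V} {k : ℕ} (hk : S.ncard = k) (f : Fin k → V)
    (hinj : Function.Injective f) (hmem : ∀ i, f i ∈ S) : ∀ s ∈ S, ∃ i, f i = s := by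
  classical
  have hfin : S.Finite := S.toFinite
  haveI := hfin.fintype
  have hcard : Fintype.card S = k := by
    rw [← Set.toFinset_card, ← Set.ncard_eq_toFinset_card' S, hk]
  let g : Fin k → S := fun i => ⟨f i, hmem i⟩
  have hginj : Function.Injective g := fun i j hij => hinj (congrArg Subtype.val hij)
  have hgbij : Function.Bijective g :=
    (Fintype.bijective_iff_injective_and_card g).mpr ⟨hginj, by rw [Fintype.card_fin, hcard]⟩
  intro s hs
  obtain ⟨i, hi⟩ := hgbij.2 ⟨s, hs⟩
  exact ⟨i, congrArg Subtype.val hi⟩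

/-- Normalize a path system so each path meets `B` only at its endpoint. -/
lemma psys_norm_end {A B : Set V} {k : ℕ} (sys : PSys G A B k) :
    ∃ sys' : PSys G A B k, sys'.a = sys.a ∧
      (∀ i y, y ∈ (sys'.w i).support → y ∈ B → y = sys'.b i) ∧
      (∀ i y, y ∈ (sys'.w i).support → y ∈ (sys.w i).support) := by
  classical
  have hex := fun i => exists_firstHit (S := B) (sys.w i)
    ⟨sys.b i, Walk.end_mem_support _, sys.hb i⟩
  choose c w' hcB hsub hedges honly hpath using hex
  refine ⟨⟨sys.a, c, w', sys.ha, hcB, fun i => hpath i (sys.hpath i), ?_⟩, rfl, ?_, ?_⟩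
  · intro i j hij y hyi hyj
    exact sys.hdisj i j hij y (hsub i y hyi) (hsub j y hyj)
  · exact honly
  · exact hsub

/-- Reverse a path system. -/
def PSys.rev {A B : Set V} {k : ℕ} (sys : PSys G A B k) : PSys G B A k where
  a := sys.b
  b := sys.a
  w := fun i => (sys.w i).reverse
  ha := sys.hb
  hb := sys.ha
  hpath := fun i => (sys.hpath i).reverse
  hdisj := by
    intro i j hij y hyi hyj
    rw [Walk.support_reverse, List.mem_reverse] at hyi hyj
    exact sys.hdisj i j hij y hyi hyj

lemma psys_norm_start {A B : Set V} {k : ℕ} (sys : PSys G A B k) :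
    ∃ sys' : PSys G A B k, sys'.b = sys.b ∧
      (∀ i y, y ∈ (sys'.w i).support → y ∈ A → y = sys'.a i) ∧
      (∀ i y, y ∈ (sys'.w i).support → y ∈ (sys.w i).support) := by
  obtain ⟨sys', h1, h2, h3⟩ := psys_norm_end (sys.rev)
  refine ⟨sys'.rev, by simp [PSys.rev, h1], ?_, ?_⟩
  · intro i y hy hyA
    rw [PSys.rev, Walk.support_reverse, List.mem_reverse] at hy
    exact h2 i y hy hyA
  · intro i y hy
    rw [PSys.rev, Walk.support_reverse, List.mem_reverse] at hy
    have := h3 i y hy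
    rw [PSys.rev, Walk.support_reverse, List.mem_reverse] at this
    exact this

def psys_mapLe {G' : SimpleGraph V} (hle : G ≤ G') {A B : Set V} {k : ℕ}
    (sys : PSys G A B k) : PSys G' A B k where
  a := sys.a
  b := sys.b
  w := fun i => (sys.w i).mapLe hle
  ha := sys.ha
  hb := sys.hb
  hpath := fun i => (sys.hpath i).mapLe hle
  hdisj := by
    intro i j hij y hyi hyj
    rw [support_mapLe] at hyi hyj
    exact sys.hdisj i j hij y hyi hyj



lemma menger_base [Fintype V] {G : SimpleGraph V} {A B : Set V} {k : ℕ}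
    (hniso : ∀ p q : V, G.Adj p q → q ∉ B)
    (h : ∀ S : Set V, Sep G A B S → k ≤ S.ncard) : Nonempty (PSys G A B k) := by
  have hsep : Sep G A B (A ∩ B) := by
    intro a b ha hb w
    by_cases hab : a = b
    · subst hab
      exact ⟨a, ⟨ha, hb⟩, w.start_mem_support⟩
    · exfalso
      obtain ⟨y, hy, q, hq⟩ := Walk.exists_eq_cons_of_ne (Ne.symm hab) w.reverse
      exact hniso y b hy.symm hb
  obtain ⟨f, hinj, hmem⟩ := exists_inj_of_le_ncard (h _ hsep)
  exact ⟨⟨f, f, fun i => Walk.nil, fun i => (hmem i).1, fun i => (hmem i).2,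
    fun i => Walk.IsPath.nil, by
      intro i jj hij y hyi hyj
      simp only [Walk.support_nil, List.mem_singleton] at hyi hyj
      exact hij (hinj (hyi ▸ hyj ▸ rfl))⟩⟩

theorem menger_aux [Fintype V] :
    ∀ (n : ℕ) (G : SimpleGraph V) (A B : Set V) (k : ℕ),
      G.edgeSet.ncard ≤ n →
      (∀ S : Set V, Sep G A B S → k ≤ S.ncard) →
      Nonempty (PSys G A B k) := by
  intro n
  induction n with
  | zero =>
    intro G A B k hn h
    refine menger_base ?_ h
    intro p q hadj _
    have h1 : G.edgeSet = ∅ := (Set.ncard_eq_zero (Set.toFinite _)).mp (Nat.le_zero.mp hn)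
    have h2 : s(p, q) ∈ G.edgeSet := hadj
    rw [h1] at h2
    exact h2
  | succ n ih =>
    intro G A B k hn h
    classical
    by_cases hB : ∃ p q : V, G.Adj p q ∧ q ∈ B
    swap
    · push_neg at hB
      exact menger_base (fun p q hpq hqB => hB p q hpq hqB) h
    obtain ⟨x0, b0, hadj, hb0⟩ := hB
    have hx0b0 : x0 ≠ b0 := hadj.ne
    set G' := G.deleteEdges {s(x0, b0)} with hG'def
    have hle : G' ≤ G := by rw [hG'def]; exact G.deleteEdges_le _
    have heconv : G'.edgeSet = G.edgeSet \ {s(x0, b0)} := by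
      rw [hG'def, edgeSet_deleteEdges]
    have hecard : G'.edgeSet.ncard ≤ n := by
      have hein : s(x0, b0) ∈ G.edgeSet := hadj
      rw [heconv, Set.ncard_diff_singleton_of_mem hein]
      omega
    by_cases hsep' : ∀ S : Set V, Sep G' A B S → k ≤ S.ncard
    · obtain ⟨sys⟩ := ih G' A B k hecard hsep'
      exact ⟨psys_mapLe hle sys⟩
    push_neg at hsep'
    obtain ⟨S₁, hS₁sep, hS₁card⟩ := hsep'
    have noCross : ∀ (z p q : V), p ∈ A → q ∈ B → ∀ (w1 : G'.Walk p z) (w2 : G'.Walk z q),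
        (∀ y ∈ w1.support, y ∉ S₁) → (∀ y ∈ w2.support, y ∉ S₁) → False := by
      intro z p q hp hq w1 w2 h1 h2
      obtain ⟨s, hsS, hs⟩ := hS₁sep hp hq (w1.append w2)
      rw [Walk.mem_support_append_iff] at hs
      rcases hs with hs | hs
      · exact h1 s hs hsS
      · exact h2 s hs hsS
    -- edge-freeness helper
    have free_of_not_mem : ∀ {p q : V} (W : G.Walk p q), s(x0, b0) ∉ W.edges →
        ∀ e' ∈ W.edges, e' ∈ G'.edgeSet := by
      intro p q W he e' he'
      rw [heconv]
      refine ⟨W.edges_subset_edgeSet he', ?_⟩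
      intro hh
      rw [Set.mem_singleton_iff] at hh
      exact he (hh ▸ he')
    -- Claim I
    have claimI : ∀ Z : Set V, Sep G' A (insert x0 S₁) Z → Sep G A B Z := by
      intro Z hZ a b ha hb w
      have hbyp : w.bypass.IsPath := Walk.bypass_isPath w
      obtain ⟨b₁, W', hb₁B, hsub, hed, honly, hpath⟩ :=
        exists_firstHit (S := B) w.bypass ⟨b, Walk.end_mem_support _, hb⟩
      have hWpath := hpath hbyp
      have hsubw : ∀ y ∈ W'.support, y ∈ w.support := fun y hy =>
        Walk.support_bypass_subset _ (hsub y hy)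
      by_cases he : s(x0, b0) ∈ W'.edges
      · have hx0supp : x0 ∈ W'.support := Walk.fst_mem_support_of_mem_edges W' he
        have hb0supp : b0 ∈ W'.support := Walk.snd_mem_support_of_mem_edges W' he
        obtain ⟨c, Wp, hcS, hsubp, hedp, honlyp, hpathp⟩ :=
          exists_firstHit (S := insert b0 (insert x0 S₁)) W'
            ⟨x0, hx0supp, Set.mem_insert_of_mem _ (Set.mem_insert _ _)⟩
        have hWpfree : ∀ e' ∈ Wp.edges, e' ∈ G'.edgeSet := by
          refine free_of_not_mem Wp ?_
          intro hee
          have hx0p : x0 ∈ Wp.support := Walk.fst_mem_support_of_mem_edges Wp hee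
          have hb0p : b0 ∈ Wp.support := Walk.snd_mem_support_of_mem_edges Wp hee
          have e1 := honlyp x0 hx0p (Set.mem_insert_of_mem _ (Set.mem_insert _ _))
          have e2 := honlyp b0 hb0p (Set.mem_insert _ _)
          exact hx0b0 (e1.trans e2.symm)
        have hsubpw : ∀ y ∈ Wp.support, y ∈ w.support := fun y hy => hsubw y (hsubp y hy)
        rcases hcS with hc | hc
        · -- c = b0
          by_cases hb0S : b0 ∈ S₁
          · obtain ⟨z, hzZ, hz⟩ := hZ ha (Set.mem_insert_of_mem _ (hc ▸ hb0S))
              (Wp.transfer G' hWpfree)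
            rw [Walk.support_transfer] at hz
            exact ⟨z, hzZ, hsubpw z hz⟩
          · exfalso
            obtain ⟨s, hsS, hs⟩ := hS₁sep ha (hc ▸ hb0)
              ((Wp.transfer G' hWpfree).copy rfl hc)
            rw [Walk.support_copy, Walk.support_transfer] at hs
            have := honlyp s hs (Set.mem_insert_of_mem _ (Set.mem_insert_of_mem _ hsS))
            rw [this, hc] at hsS
            exact hb0S hsS
        · obtain ⟨z, hzZ, hz⟩ := hZ ha hc (Wp.transfer G' hWpfree)
          rw [Walk.support_transfer] at hz
          exact ⟨z, hzZ, hsubpw z hz⟩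
      · have hW'free := free_of_not_mem W' he
        obtain ⟨s, hsS, hs⟩ := hS₁sep ha hb₁B (W'.transfer G' hW'free)
        have hs' := hs
        obtain ⟨z, hzZ, hz⟩ := hZ ha (Set.mem_insert_of_mem _ hsS)
          ((W'.transfer G' hW'free).takeUntil s hs)
        have hz2 := Walk.support_takeUntil_subset _ hs hz
        rw [Walk.support_transfer] at hz2
        exact ⟨z, hzZ, hsubw z hz2⟩
    -- Claim II
    have claimII : ∀ Z : Set V, Sep G' (insert b0 S₁) B Z → Sep G A B Z := by
      intro Z hZ a b ha hb w
      have hb0Z : b0 ∈ Z := by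
        obtain ⟨s, hsZ, hs⟩ := hZ (Set.mem_insert b0 S₁) hb0 (Walk.nil : G'.Walk b0 b0)
        simp only [Walk.support_nil, List.mem_singleton] at hs
        exact hs ▸ hsZ
      have hbyp : w.bypass.IsPath := Walk.bypass_isPath w
      obtain ⟨b₁, W', hb₁B, hsub, hed, honly, hpath⟩ :=
        exists_firstHit (S := B) w.bypass ⟨b, Walk.end_mem_support _, hb⟩
      have hsubw : ∀ y ∈ W'.support, y ∈ w.support := fun y hy =>
        Walk.support_bypass_subset _ (hsub y hy)
      by_cases he : s(x0, b0) ∈ W'.edges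
      · exact ⟨b0, hb0Z, hsubw b0 (Walk.snd_mem_support_of_mem_edges W' he)⟩
      · have hW'free := free_of_not_mem W' he
        obtain ⟨s, hsS, hs⟩ := hS₁sep ha hb₁B (W'.transfer G' hW'free)
        obtain ⟨z, hzZ, hz⟩ := hZ (Set.mem_insert_of_mem _ hsS) hb₁B
          ((W'.transfer G' hW'free).dropUntil s hs)
        have hz2 := Walk.support_dropUntil_subset _ hs hz
        rw [Walk.support_transfer] at hz2
        exact ⟨z, hzZ, hsubw z hz2⟩
    have hbX : ∀ Z, Sep G' A (insert x0 S₁) Z → k ≤ Z.ncard := fun Z hZ => h Z (claimI Z hZ)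
    have hbY : ∀ Z, Sep G' (insert b0 S₁) B Z → k ≤ Z.ncard := fun Z hZ => h Z (claimII Z hZ)
    have hX0new : x0 ∉ S₁ := by
      intro hx
      have hs : Sep G' A (insert x0 S₁) S₁ := by
        intro a b ha hb w
        have hb' : b ∈ S₁ := by
          rcases hb with rfl | hb
          · exact hx
          · exact hb
        exact ⟨b, hb', w.end_mem_support⟩
      have := hbX S₁ hs
      omega
    have hb0new : b0 ∉ S₁ := by
      intro hbm
      have hs : Sep G' (insert b0 S₁) B S₁ := by
        intro a b ha hb w
        have ha' : a ∈ S₁ := by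
          rcases ha with rfl | ha
          · exact hbm
          · exact ha
        exact ⟨a, ha', w.start_mem_support⟩
      have := hbY S₁ hs
      omega
    have hcardX : (insert x0 S₁).ncard = k := by
      have h1 := hbX _ (fun a b ha hb w => ⟨b, hb, w.end_mem_support⟩)
      have h2 := Set.ncard_insert_le x0 S₁
      omega
    have hcardY : (insert b0 S₁).ncard = k := by
      have h1 := hbY _ (fun a b ha hb w => ⟨a, ha, w.start_mem_support⟩)
      have h2 := Set.ncard_insert_le b0 S₁
      omega
    obtain ⟨sysL0⟩ := ih G' A (insert x0 S₁) k hecard hbX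
    obtain ⟨sysR0⟩ := ih G' (insert b0 S₁) B k hecard hbY
    obtain ⟨L, hLa, hLonly, hLsub⟩ := psys_norm_end sysL0
    obtain ⟨R, hRb, hRonly, hRsub⟩ := psys_norm_start sysR0
    clear hLa hRb hLsub hRsub sysL0 sysR0
    have hLbinj : Function.Injective L.b := by
      intro i jj hij
      by_contra hne
      have hmem : L.b i ∈ (L.w jj).support := by
        simp only [hij]
        exact Walk.end_mem_support (L.w jj)
      exact L.hdisj i jj hne (L.b i) (Walk.end_mem_support _) hmem
    have hRainj : Function.Injective R.a := by
      intro i jj hij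
      by_contra hne
      have hmem : R.a i ∈ (R.w jj).support := by
        simp only [hij]
        exact Walk.start_mem_support (R.w jj)
      exact R.hdisj i jj hne (R.a i) (Walk.start_mem_support _) hmem
    have hLsurj : ∀ s ∈ insert x0 S₁, ∃ i, L.b i = s := surj_of_inj_ncard hcardX L.b hLbinj L.hb
    have hRsurj : ∀ s ∈ insert b0 S₁, ∃ i, R.a i = s := surj_of_inj_ncard hcardY R.a hRainj R.ha
    have hLavoid : ∀ i y, y ∈ (L.w i).support → y ∈ S₁ → y = L.b i := fun i y hy hyS =>
      hLonly i y hy (Set.mem_insert_of_mem _ hyS)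
    have hRavoid : ∀ i y, y ∈ (R.w i).support → y ∈ S₁ → y = R.a i := fun i y hy hyS =>
      hRonly i y hy (Set.mem_insert_of_mem _ hyS)
    have hLpre : ∀ i z, z ∈ (L.w i).support → z ≠ L.b i →
        ∃ q : G'.Walk (L.a i) z, ∀ y ∈ q.support, y ∉ S₁ := by
      intro i z hz hzb
      obtain ⟨q, _, hsub, hnot⟩ := exists_path_prefix (L.w i) (L.hpath i) hz hzb
      exact ⟨q, fun y hy hyS => hnot ((hLavoid i y (hsub y hy) hyS) ▸ hy)⟩
    have hRsuf : ∀ jj z, z ∈ (R.w jj).support → z ≠ R.a jj →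
        ∃ q : G'.Walk z (R.b jj), ∀ y ∈ q.support, y ∉ S₁ := by
      intro jj z hz hza
      obtain ⟨q, _, hsub, hnot⟩ := exists_path_suffix (R.w jj) (R.hpath jj) hz hza
      exact ⟨q, fun y hy hyS => hnot ((hRavoid jj y (hsub y hy) hyS) ▸ hy)⟩
    have hLall : ∀ i, L.b i ∉ S₁ → ∀ y ∈ (L.w i).support, y ∉ S₁ := by
      intro i hbi y hy hyS
      exact hbi ((hLavoid i y hy hyS) ▸ hyS)
    have hRall : ∀ jj, R.a jj ∉ S₁ → ∀ y ∈ (R.w jj).support, y ∉ S₁ := by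
      intro jj hai y hy hyS
      exact hai ((hRavoid jj y hy hyS) ▸ hyS)
    have hRnoX0 : ∀ jj, x0 ∉ (R.w jj).support := by
      intro jj hx
      have hxa : x0 ≠ R.a jj := by
        intro heq
        rcases R.ha jj with hh | hh
        · exact hx0b0 (heq.trans hh)
        · exact hX0new (heq ▸ hh)
      obtain ⟨q2, hq2⟩ := hRsuf jj x0 hx hxa
      obtain ⟨i0, hi0⟩ := hLsurj x0 (Set.mem_insert x0 S₁)
      have hLav := hLall i0 (by rw [hi0]; exact hX0new)
      refine noCross x0 (L.a i0) (R.b jj) (L.ha i0) (R.hb jj) ((L.w i0).copy rfl hi0) q2 ?_ hq2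
      intro y hy
      rw [Walk.support_copy] at hy
      exact hLav y hy
    have hLnoB0 : ∀ i, b0 ∉ (L.w i).support := by
      intro i hbm
      have hba : b0 ≠ L.b i := by
        intro heq
        rcases (heq ▸ L.hb i : b0 ∈ insert x0 S₁) with hh | hh
        · exact hx0b0 hh.symm
        · exact hb0new hh
      obtain ⟨q1, hq1⟩ := hLpre i b0 hbm hba
      obtain ⟨j0, hj0⟩ := hRsurj b0 (Set.mem_insert b0 S₁)
      have hRav := hRall j0 (by rw [hj0]; exact hb0new)
      refine noCross b0 (L.a i) (R.b j0) (L.ha i) (R.hb j0) q1 ((R.w j0).copy hj0 rfl) hq1 ?_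
      intro y hy
      rw [Walk.support_copy] at hy
      exact hRav y hy
    have master : ∀ i jj y, y ∈ (L.w i).support → y ∈ (R.w jj).support →
        y = L.b i ∧ y = R.a jj := by
      intro i jj y hyL hyR
      by_cases h1 : y = L.b i
      · refine ⟨h1, ?_⟩
        by_cases h2 : y = R.a jj
        · exact h2
        · exfalso
          rcases (h1 ▸ L.hb i : y ∈ insert x0 S₁) with hh | hh
          · exact hRnoX0 jj (hh ▸ hyR)
          · exact h2 (hRavoid jj y hyR hh)
      · by_cases h2 : y = R.a jj
        · exfalso
          rcases (h2 ▸ R.ha jj : y ∈ insert b0 S₁) with hh | hh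
          · exact hLnoB0 i (hh ▸ hyL)
          · exact h1 (hLavoid i y hyL hh)
        · exfalso
          obtain ⟨q1, hq1⟩ := hLpre i y hyL h1
          obtain ⟨q2, hq2⟩ := hRsuf jj y hyR h2
          exact noCross y (L.a i) (R.b jj) (L.ha i) (R.hb jj) q1 q2 hq1 hq2
    have htgtmem : ∀ i, (if L.b i = x0 then b0 else L.b i) ∈ insert b0 S₁ := by
      intro i
      by_cases hbi : L.b i = x0
      · rw [if_pos hbi]; exact Set.mem_insert _ _
      · rw [if_neg hbi]
        rcases L.hb i with hh | hh
        · exact absurd hh hbi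
        · exact Set.mem_insert_of_mem _ hh
    choose j hj using fun i => hRsurj _ (htgtmem i)
    have htgtinj : ∀ i1 i2, j i1 = j i2 → i1 = i2 := by
      intro i1 i2 hj12
      have e1 := hj i1
      have e2 := hj i2
      rw [hj12] at e1
      have heq := e1.symm.trans e2
      by_cases b1 : L.b i1 = x0 <;> by_cases b2 : L.b i2 = x0
      · exact hLbinj (b1.trans b2.symm)
      · rw [if_pos b1, if_neg b2] at heq
        exfalso
        rcases (heq ▸ L.hb i2 : b0 ∈ insert x0 S₁) with hh | hh
        · exact hx0b0 hh.symm
        · exact hb0new hh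
      · rw [if_neg b1, if_pos b2] at heq
        exfalso
        rcases (heq.symm ▸ L.hb i1 : b0 ∈ insert x0 S₁) with hh | hh
        · exact hx0b0 hh.symm
        · exact hb0new hh
      · rw [if_neg b1, if_neg b2] at heq
        exact hLbinj heq
    -- build the final walks
    have hadj' : G.Adj x0 b0 := hadj
    have isPath_copy : ∀ {p q p' q' : V} (wk : G.Walk p q) (h1 : p = p') (h2 : q = q'),
        wk.IsPath → (wk.copy h1 h2).IsPath := by
      intro p q p' q' wk h1 h2 hwk
      rw [Walk.isPath_def, Walk.support_copy]
      exact hwk.support_nodup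
    let WL : ∀ i, G.Walk (L.a i) (L.b i) := fun i => (L.w i).mapLe hle
    let WR : ∀ i, G.Walk (R.a (j i)) (R.b (j i)) := fun i => (R.w (j i)).mapLe hle
    let final : ∀ i, G.Walk (L.a i) (R.b (j i)) := fun i =>
      if hbi : L.b i = x0 then
        (WL i).append ((Walk.cons hadj' ((WR i).copy (by rw [hj i, if_pos hbi]) rfl)).copy
          hbi.symm rfl)
      else (WL i).append ((WR i).copy (by rw [hj i, if_neg hbi]) rfl)
    have hsupWL : ∀ i, (WL i).support = (L.w i).support := fun i => support_mapLe hle _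
    have hsupWR : ∀ i, (WR i).support = (R.w (j i)).support := fun i => support_mapLe hle _
    have hfinal_sup : ∀ i y, y ∈ (final i).support →
        (y ∈ (L.w i).support ∨ y ∈ (R.w (j i)).support) := by
      intro i y hy
      by_cases hbi : L.b i = x0
      · rw [show final i = (WL i).append ((Walk.cons hadj'
            ((WR i).copy (by rw [hj i, if_pos hbi]) rfl)).copy hbi.symm rfl)
            from dif_pos hbi] at hy
        rw [Walk.mem_support_append_iff, Walk.support_copy, Walk.support_cons,
          Walk.support_copy] at hy
        rcases hy with hy | hy
        · left; rwa [hsupWL] at hy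
        · rcases List.mem_cons.mp hy with rfl | hy
          · left
            have hmem := Walk.end_mem_support (L.w i)
            simp only [hbi] at hmem
            exact hmem
          · right; rwa [hsupWR] at hy
      · rw [show final i = (WL i).append ((WR i).copy (by rw [hj i, if_neg hbi]) rfl)
            from dif_neg hbi] at hy
        rw [Walk.mem_support_append_iff, Walk.support_copy] at hy
        rcases hy with hy | hy
        · left; rwa [hsupWL] at hy
        · right; rwa [hsupWR] at hy
    have hfinal_path : ∀ i, (final i).IsPath := by
      intro i
      by_cases hbi : L.b i = x0
      · rw [show final i = (WL i).append ((Walk.cons hadj'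
            ((WR i).copy (by rw [hj i, if_pos hbi]) rfl)).copy hbi.symm rfl)
            from dif_pos hbi]
        refine isPath_append ((L.hpath i).mapLe hle) ?_ ?_
        · refine isPath_copy _ _ _ ?_
          rw [Walk.cons_isPath_iff]
          constructor
          · exact isPath_copy _ _ _ ((R.hpath (j i)).mapLe hle)
          · rw [Walk.support_copy, hsupWR]
            exact hRnoX0 (j i)
        · intro y hyL hyR
          rw [hsupWL] at hyL
          rw [Walk.support_copy, Walk.support_cons, Walk.support_copy, hsupWR] at hyR
          rcases List.mem_cons.mp hyR with rfl | hyR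
          · exact hbi.symm
          · exact (master i (j i) y hyL hyR).1
      · rw [show final i = (WL i).append ((WR i).copy (by rw [hj i, if_neg hbi]) rfl)
            from dif_neg hbi]
        refine isPath_append ((L.hpath i).mapLe hle)
          (isPath_copy _ _ _ ((R.hpath (j i)).mapLe hle)) ?_
        intro y hyL hyR
        rw [hsupWL] at hyL
        rw [Walk.support_copy, hsupWR] at hyR
        exact (master i (j i) y hyL hyR).1
    refine ⟨⟨L.a, fun i => R.b (j i), final, L.ha, fun i => R.hb (j i), hfinal_path, ?_⟩⟩
    intro i i' hne y hyi hyi'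
    have hy1 := hfinal_sup i y hyi
    have hy2 := hfinal_sup i' y hyi'
    rcases hy1 with hL1 | hR1 <;> rcases hy2 with hL2 | hR2
    · exact L.hdisj i i' hne y hL1 hL2
    · obtain ⟨hyb, hya⟩ := master i (j i') y hL1 hR2
      have e2 := hj i'
      by_cases b2 : L.b i' = x0
      · rw [if_pos b2] at e2
        have hyb0 : y = b0 := hya.trans e2
        simp only [hyb0] at hL1
        exact hLnoB0 i hL1
      · rw [if_neg b2] at e2
        exact hne (hLbinj (hyb.symm.trans (hya.trans e2)))
    · obtain ⟨hyb, hya⟩ := master i' (j i) y hL2 hR1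
      have e2 := hj i
      by_cases b2 : L.b i = x0
      · rw [if_pos b2] at e2
        have hyb0 : y = b0 := hya.trans e2
        simp only [hyb0] at hL2
        exact hLnoB0 i' hL2
      · rw [if_neg b2] at e2
        exact hne (hLbinj ((hya.trans e2).symm.trans hyb))
    · by_cases hjj : j i = j i'
      · exact hne (htgtinj _ _ hjj)
      · exact R.hdisj (j i) (j i') hjj y hR1 hR2


/-- The graph with all edges at `x` removed. -/
def delVert (G : SimpleGraph V) (x : V) : SimpleGraph V where
  Adj p q := G.Adj p q ∧ p ≠ x ∧ q ≠ x
  symm := ⟨fun p q h => ⟨h.1.symm, h.2.2, h.2.1⟩⟩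
  loopless := ⟨fun p h => G.loopless.irrefl p h.1⟩

lemma delVert_le (x : V) : delVert G x ≤ G := fun _ _ h => h.1

lemma delVert_not_mem_support {x : V} : ∀ {p q : V} (w : (delVert G x).Walk p q),
    p ≠ x → x ∉ w.support := by
  intro p q w
  induction w with
  | nil =>
    intro hp hx
    simp only [Walk.support_nil, List.mem_singleton] at hx
    exact hp hx.symm
  | cons h rest ih =>
    intro hp hx
    rw [Walk.support_cons, List.mem_cons] at hx
    rcases hx with hx | hx
    · exact hp hx.symm
    · exact ih h.2.2 hx

lemma transfer_to_delVert {x : V} {p q : V} (w : G.Walk p q) (hx : x ∉ w.support) :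
    ∀ e ∈ w.edges, e ∈ (delVert G x).edgeSet := by
  intro e he
  induction e with
  | _ c d =>
    have hc : c ∈ w.support := Walk.fst_mem_support_of_mem_edges w he
    have hd : d ∈ w.support := Walk.snd_mem_support_of_mem_edges w he
    have hadj : G.Adj c d := Walk.adj_of_mem_edges w he
    rw [mem_edgeSet]
    exact ⟨hadj, fun hcx => hx (hcx ▸ hc), fun hdx => hx (hdx ▸ hd)⟩

/-- The fan lemma. -/
lemma fan [Fintype V] {G : SimpleGraph V} {k : ℕ}
    (hH : ∀ S : Set V, S.ncard < k → ∀ a b : V, a ∉ S → b ∉ S →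
      ∃ w : G.Walk a b, ∀ y ∈ w.support, y ∉ S)
    {x : V} {U : Set V} (hxU : x ∉ U) (hU : U.Nonempty) :
    ∃ (t : Fin (min k U.ncard) → V) (F : ∀ i, G.Walk x (t i)),
      Function.Injective t ∧ (∀ i, t i ∈ U) ∧ (∀ i, (F i).IsPath) ∧
      (∀ i y, y ∈ (F i).support → y ∈ U → y = t i) ∧
      (∀ i i', i ≠ i' → ∀ y, y ∈ (F i).support → y ∈ (F i').support → y = x) := by
  classical
  set r := min k U.ncard with hrdef
  have hbound : ∀ Z : Set V, Sep (delVert G x) (G.neighborSet x) U Z → r ≤ Z.ncard := by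
    intro Z hZ
    by_contra hlt
    push_neg at hlt
    set Z' := Z \ {x} with hZ'def
    have hZ'le : Z'.ncard ≤ Z.ncard := Set.ncard_le_ncard Set.diff_subset (Set.toFinite _)
    have hZ'k : Z'.ncard < k := by omega
    have hZ'U : Z'.ncard < U.ncard := by omega
    obtain ⟨u0, hu0U, hu0Z⟩ : ∃ u0 ∈ U, u0 ∉ Z' := by
      by_contra hcon
      push_neg at hcon
      have := Set.ncard_le_ncard hcon (Set.toFinite _)
      omega
    have hxZ' : x ∉ Z' := fun h => h.2 rfl
    obtain ⟨w, hw⟩ := hH Z' hZ'k x u0 hxZ' hu0Z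
    have hxu0 : x ≠ u0 := fun h => hxU (h ▸ hu0U)
    have hbp : w.bypass.IsPath := Walk.bypass_isPath w
    have hbw : ∀ y ∈ w.bypass.support, y ∉ Z' := fun y hy =>
      hw y (Walk.support_bypass_subset _ hy)
    obtain ⟨a2, hxa2, rest, hrest⟩ := Walk.exists_eq_cons_of_ne hxu0 w.bypass
    have hxrest : x ∉ rest.support := by
      have := hbp
      rw [hrest, Walk.cons_isPath_iff] at this
      exact this.2
    have hrestZ : ∀ y ∈ rest.support, y ∉ Z' := by
      intro y hy
      apply hbw
      rw [hrest, Walk.support_cons]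
      exact List.mem_cons_of_mem _ hy
    obtain ⟨s, hsZ, hs⟩ := hZ hxa2 hu0U (rest.transfer _ (transfer_to_delVert rest hxrest))
    rw [Walk.support_transfer] at hs
    have hsZ' : s ∈ Z' := by
      refine ⟨hsZ, ?_⟩
      intro hsx
      rw [Set.mem_singleton_iff] at hsx
      exact hxrest (hsx ▸ hs)
    exact hrestZ s hs hsZ'
  obtain ⟨sys0⟩ := menger_aux ((delVert G x).edgeSet.ncard) (delVert G x)
    (G.neighborSet x) U r le_rfl hbound
  obtain ⟨sys, _, honly, _⟩ := psys_norm_end sys0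
  have hax : ∀ i, sys.a i ≠ x := by
    intro i h
    have := sys.ha i
    rw [h] at this
    exact G.loopless.irrefl x this
  have hnox : ∀ i, x ∉ (sys.w i).support := fun i => delVert_not_mem_support (sys.w i) (hax i)
  refine ⟨sys.b, fun i => Walk.cons ((G.mem_neighborSet x _).mp (sys.ha i)) ((sys.w i).mapLe (delVert_le x)), ?_, sys.hb,
    ?_, ?_, ?_⟩
  · intro i j hij
    by_contra hne
    have hmem : sys.b i ∈ (sys.w j).support := by
      simp only [hij]
      exact Walk.end_mem_support (sys.w j)
    exact sys.hdisj i j hne (sys.b i) (Walk.end_mem_support _) hmem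
  · intro i
    rw [Walk.cons_isPath_iff]
    constructor
    · rw [Walk.isPath_def]
      have h2 : ((sys.w i).mapLe (delVert_le x)).support = (sys.w i).support := by
        simp only [Walk.mapLe, Walk.support_map, Hom.coe_ofLE]
        convert List.map_id _
      rw [h2]
      exact (sys.hpath i).support_nodup
    · intro hx2
      have h2 : ((sys.w i).mapLe (delVert_le x)).support = (sys.w i).support := by
        simp only [Walk.mapLe, Walk.support_map, Hom.coe_ofLE]
        convert List.map_id _
      rw [h2] at hx2
      exact hnox i hx2
  · intro i y hy hyU
    rw [Walk.support_cons, List.mem_cons] at hy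
    rcases hy with rfl | hy
    · exact absurd hyU hxU
    · have h2 : ((sys.w i).mapLe (delVert_le x)).support = (sys.w i).support := by
        simp only [Walk.mapLe, Walk.support_map, Hom.coe_ofLE]
        convert List.map_id _
      rw [h2] at hy
      exact honly i y hy hyU
  · intro i i' hii y hy hy'
    rw [Walk.support_cons, List.mem_cons] at hy hy'
    have h2 : ∀ j, ((sys.w j).mapLe (delVert_le x)).support = (sys.w j).support := by
      intro j
      simp only [Walk.mapLe, Walk.support_map, Hom.coe_ofLE]
      convert List.map_id _
    rcases hy with rfl | hy
    · rfl
    · rcases hy' with rfl | hy'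
      · rfl
      · rw [h2] at hy hy'
        exact absurd hy' (sys.hdisj i i' hii y hy)


lemma indexOf_inj' [DecidableEq V] {l : List V} {y1 y2 : V} (h1 : y1 ∈ l) (h2 : y2 ∈ l)
    (h : l.idxOf y1 = l.idxOf y2) : y1 = y2 := by
  have g1 := List.getElem_idxOf (List.idxOf_lt_length_iff.mpr h1)
  have g2 := List.getElem_idxOf (List.idxOf_lt_length_iff.mpr h2)
  rw [← g1, ← g2]
  simp only [h]

lemma until_facts [DecidableEq V] {u v z : V} (P : G.Walk u v) (hP : P.IsPath)
    (hz : z ∈ P.support) :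
    (∀ y, y ∈ P.support →
      (y ∈ (P.takeUntil z hz).support ↔ P.support.idxOf y ≤ P.support.idxOf z)) ∧
    (∀ y, y ∈ P.support →
      (y ∈ (P.dropUntil z hz).support ↔ P.support.idxOf z ≤ P.support.idxOf y)) := by
  set l1 := (P.takeUntil z hz).support with hl1
  set l2t := (P.dropUntil z hz).support.tail with hl2
  have hsplit : P.support = l1 ++ l2t := by
    rw [hl1, hl2, ← Walk.support_append, Walk.take_spec]
  have hnd : (l1 ++ l2t).Nodup := by rw [← hsplit]; exact hP.support_nodup
  have hnd1 : l1.Nodup := hnd.of_append_left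
  have hl1ne : l1 ≠ [] := Walk.support_ne_nil _
  have hl1pos : 0 < l1.length := List.length_pos_iff.mpr hl1ne
  have hlast : l1.getLast hl1ne = z := Walk.getLast_support _
  have hz1 : z ∈ l1 := Walk.end_mem_support _
  have hdropcons : (P.dropUntil z hz).support = z :: l2t := by
    rw [hl2]
    exact Walk.support_eq_cons _
  have hidx_mem : ∀ y, y ∈ l1 → P.support.idxOf y < l1.length := by
    intro y hy
    rw [hsplit, List.idxOf_append_of_mem hy]
    exact List.idxOf_lt_length_iff.mpr hy
  have hidx_not : ∀ y, y ∉ l1 → l1.length ≤ P.support.idxOf y := by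
    intro y hy
    rw [hsplit, List.idxOf_append_of_notMem hy]
    exact Nat.le_add_right _ _
  have hzidx : P.support.idxOf z = l1.length - 1 := by
    have h1 : l1.dropLast ++ [z] = l1 := by rw [← hlast]; exact List.dropLast_append_getLast hl1ne
    have hznot : z ∉ l1.dropLast := by
      intro hmem
      have hnd1' := hnd1
      rw [← h1, List.nodup_append] at hnd1'
      exact hnd1'.2.2 z hmem z (List.mem_singleton_self _) rfl
    have h2 : l1.idxOf z = l1.dropLast.length := by
      conv_lhs => rw [← h1]
      rw [List.idxOf_append_of_notMem hznot, List.idxOf_cons_self, Nat.add_zero]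
    rw [hsplit, List.idxOf_append_of_mem hz1, h2, List.length_dropLast]
  have hinj : ∀ y1 y2, y1 ∈ P.support → y2 ∈ P.support →
      P.support.idxOf y1 = P.support.idxOf y2 → y1 = y2 := by
    intro y1 y2 h1 h2 he
    exact indexOf_inj' h1 h2 he
  constructor
  · intro y hy
    constructor
    · intro hmem
      have := hidx_mem y hmem
      omega
    · intro hle
      by_contra hmem
      have := hidx_not y hmem
      omega
  · intro y hy
    constructor
    · intro hmem
      by_cases hyz : y = z
      · rw [hyz]
      · have hyl2t : y ∈ l2t := by
          rw [hdropcons, List.mem_cons] at hmem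
          rcases hmem with h | h
          · exact absurd h hyz
          · exact h
        have hynl1 : y ∉ l1 := by
          intro hc
          rw [List.nodup_append] at hnd
          exact hnd.2.2 y hc y hyl2t rfl
        have := hidx_not y hynl1
        omega
    · intro hge
      by_contra hmem
      have hyl1 : y ∈ l1 := by
        have hy' := hy
        rw [hsplit, List.mem_append] at hy'
        rcases hy' with h | h
        · exact h
        · exact absurd (by rw [hdropcons]; exact List.mem_cons_of_mem _ h) hmem
      have hlt := hidx_mem y hyl1
      have hyz : y ≠ z := fun h => hmem (by rw [h, hdropcons]; exact List.mem_cons_self)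
      have heq : P.support.idxOf y = P.support.idxOf z := by omega
      exact hyz (hinj y z hy hz heq)



lemma insert_all [Fintype V] {G : SimpleGraph V} {k : ℕ}
    (hH : ∀ S : Set V, S.ncard < k → ∀ a b : V, a ∉ S → b ∉ S →
      ∃ w : G.Walk a b, ∀ y ∈ w.support, y ∉ S)
    {B : Set V} (hBk : B.ncard ≤ k) :
    ∀ (n : ℕ) {u v : V} (P : G.Walk u v), P.IsPath →
      (B \ {y | y ∈ P.support}).ncard = n →
      ∃ (u' v' : V) (P' : G.Walk u' v'), P'.IsPath ∧ ∀ y ∈ B, y ∈ P'.support := by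
  classical
  intro n
  induction n using Nat.strong_induction_on with
  | _ n ih =>
  intro u v P hP hn
  rcases Nat.eq_zero_or_pos n with hn0 | hnpos
  · refine ⟨u, v, P, hP, ?_⟩
    intro y hy
    by_contra hyP
    have hmem : y ∈ B \ {y | y ∈ P.support} := ⟨hy, hyP⟩
    have h0 : (B \ {y | y ∈ P.support}).ncard = 0 := by omega
    rw [(Set.ncard_eq_zero (Set.toFinite _)).mp h0] at hmem
    exact hmem
  · have hxmem : (B \ {y | y ∈ P.support}).Nonempty := by
      rw [← Set.ncard_pos (Set.toFinite _), hn]; omega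
    obtain ⟨x, hxB, hxP⟩ := hxmem
    have hxP' : x ∉ P.support := hxP
    have hUne : ({y | y ∈ P.support} : Set V).Nonempty := ⟨u, Walk.start_mem_support P⟩
    obtain ⟨t, F, htinj, htU, hFpath, hFonly, hFpair⟩ := fan hH hxP' hUne
    have hBpos : 0 < B.ncard := (Set.ncard_pos (Set.toFinite _)).mpr ⟨x, hxB⟩
    have hUpos : 0 < ({y | y ∈ P.support} : Set V).ncard :=
      (Set.ncard_pos (Set.toFinite _)).mpr hUne
    have hrpos : 0 < min k ({y | y ∈ P.support} : Set V).ncard :=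
      lt_min (by omega) hUpos
    have htsup : ∀ i, t i ∈ P.support := fun i => htU i
    set pos : Fin (min k ({y | y ∈ P.support} : Set V).ncard) → ℕ :=
      fun i => P.support.idxOf (t i) with hpos
    have hposinj : Function.Injective pos := by
      intro i jj h
      exact htinj (indexOf_inj' (htsup i) (htsup jj) h)
    set PosF : Finset ℕ :=
      (Finset.univ : Finset (Fin (min k ({y | y ∈ P.support} : Set V).ncard))).image pos
      with hPosF
    have hPosFne : PosF.Nonempty := by
      refine ⟨pos ⟨0, hrpos⟩, ?_⟩
      rw [hPosF]
      exact Finset.mem_image_of_mem _ (Finset.mem_univ _)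
    have hPosFcard : PosF.card = min k ({y | y ∈ P.support} : Set V).ncard := by
      rw [hPosF, Finset.card_image_of_injective _ hposinj, Finset.card_univ, Fintype.card_fin]
    set BL : Finset V := P.support.toFinset.filter (· ∈ B) with hBL
    have hmemBL : ∀ y, y ∈ BL ↔ (y ∈ P.support ∧ y ∈ B) := by
      intro y
      rw [hBL, Finset.mem_filter, List.mem_toFinset]
    -- recursion helper
    have recurse : ∀ {u' v' : V} (P' : G.Walk u' v'), P'.IsPath → x ∈ P'.support →
        (∀ y ∈ B, y ∈ P.support → y ∈ P'.support) →
        ∃ (u'' v'' : V) (P'' : G.Walk u'' v''), P''.IsPath ∧ ∀ y ∈ B, y ∈ P''.support := by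
      intro u' v' P' hP' hxP2 hcov
      refine ih ((B \ {y | y ∈ P'.support}).ncard) ?_ P' hP' rfl
      have hsub : B \ {y | y ∈ P'.support} ⊆ (B \ {y | y ∈ P.support}) \ {x} := by
        intro y hy
        refine ⟨⟨hy.1, fun hyP2 => hy.2 (hcov y hy.1 hyP2)⟩, ?_⟩
        intro hyx
        rw [Set.mem_singleton_iff] at hyx
        exact hy.2 (hyx ▸ hxP2)
      have h1 := Set.ncard_le_ncard hsub (Set.toFinite _)
      have h2 : ((B \ {y | y ∈ P.support}) \ {x}).ncard = n - 1 := by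
        rw [Set.ncard_diff_singleton_of_mem ((Set.mem_diff _).mpr ⟨hxB, hxP⟩), hn]
      omega
    obtain ⟨iM, hiM⟩ : ∃ i, pos i = PosF.max' hPosFne := by
      have hmm := PosF.max'_mem hPosFne
      simp only [hPosF, Finset.mem_image] at hmm
      obtain ⟨i, _, hi⟩ := hmm
      exact ⟨i, hi⟩
    obtain ⟨im, him⟩ : ∃ i, pos i = PosF.min' hPosFne := by
      have hmm := PosF.min'_mem hPosFne
      simp only [hPosF, Finset.mem_image] at hmm
      obtain ⟨i, _, hi⟩ := hmm
      exact ⟨i, hi⟩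
    by_cases hc : ∀ b' ∈ BL, P.support.idxOf b' ≤ PosF.max' hPosFne
    · -- case (c) : cut after the last fan endpoint
      have hjun : ∀ y, y ∈ (P.takeUntil (t iM) (htsup iM)).support →
          y ∈ (F iM).reverse.support → y = t iM := by
        intro y h1 h2
        rw [Walk.support_reverse, List.mem_reverse] at h2
        exact hFonly iM y h2 (Walk.support_takeUntil_subset _ _ h1)
      refine recurse ((P.takeUntil (t iM) (htsup iM)).append (F iM).reverse)
        (isPath_append (hP.takeUntil _) (hFpath iM).reverse hjun) ?_ ?_
      · rw [Walk.mem_support_append_iff]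
        right
        rw [Walk.support_reverse, List.mem_reverse]
        exact Walk.start_mem_support _
      · intro y hyB hyP
        rw [Walk.mem_support_append_iff]
        left
        refine ((until_facts P hP (htsup iM)).1 y hyP).mpr ?_
        have h1 := hc y ((hmemBL y).mpr ⟨hyP, hyB⟩)
        have h2 : P.support.idxOf (t iM) = PosF.max' hPosFne := hiM
        omega
    by_cases hb : ∀ b' ∈ BL, PosF.min' hPosFne ≤ P.support.idxOf b'
    · -- case (b) : cut before the first fan endpoint
      have hjun : ∀ y, y ∈ (F im).support →
          y ∈ (P.dropUntil (t im) (htsup im)).support → y = t im := by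
        intro y h1 h2
        exact hFonly im y h1 (Walk.support_dropUntil_subset _ _ h2)
      refine recurse ((F im).append (P.dropUntil (t im) (htsup im)))
        (isPath_append (hFpath im) (hP.dropUntil _) hjun) ?_ ?_
      · rw [Walk.mem_support_append_iff]
        left
        exact Walk.start_mem_support _
      · intro y hyB hyP
        rw [Walk.mem_support_append_iff]
        right
        refine ((until_facts P hP (htsup im)).2 y hyP).mpr ?_
        have h1 := hb y ((hmemBL y).mpr ⟨hyP, hyB⟩)
        have h2 : P.support.idxOf (t im) = PosF.min' hPosFne := him
        omega
    by_cases hgap : ∃ q1 ∈ PosF, ∃ q2 ∈ PosF, q1 < q2 ∧ (∀ p ∈ PosF, ¬(q1 < p ∧ p < q2)) ∧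
        (∀ b' ∈ BL, ¬(q1 < P.support.idxOf b' ∧ P.support.idxOf b' < q2))
    · -- case (a) : insert in a gap
      obtain ⟨q1, hq1, q2, hq2, hqlt, hnop, hnob⟩ := hgap
      obtain ⟨i1, hi1⟩ : ∃ i, pos i = q1 := by
        simp only [hPosF, Finset.mem_image] at hq1
        obtain ⟨i, _, hi⟩ := hq1
        exact ⟨i, hi⟩
      obtain ⟨i2, hi2⟩ : ∃ i, pos i = q2 := by
        simp only [hPosF, Finset.mem_image] at hq2
        obtain ⟨i, _, hi⟩ := hq2
        exact ⟨i, hi⟩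
      have hi12 : i1 ≠ i2 := by
        intro h
        rw [h, hi2] at hi1
        omega
      have hjun1 : ∀ y, y ∈ (P.takeUntil (t i1) (htsup i1)).support →
          y ∈ (F i1).reverse.support → y = t i1 := by
        intro y h1 h2
        rw [Walk.support_reverse, List.mem_reverse] at h2
        exact hFonly i1 y h2 (Walk.support_takeUntil_subset _ _ h1)
      have hjun2 : ∀ y, y ∈ (F i2).support →
          y ∈ (P.dropUntil (t i2) (htsup i2)).support → y = t i2 := by
        intro y h1 h2
        exact hFonly i2 y h1 (Walk.support_dropUntil_subset _ _ h2)
      have hW1path : ((P.takeUntil (t i1) (htsup i1)).append (F i1).reverse).IsPath :=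
        isPath_append (hP.takeUntil _) (hFpath i1).reverse hjun1
      have hW2path : ((F i2).append (P.dropUntil (t i2) (htsup i2))).IsPath :=
        isPath_append (hFpath i2) (hP.dropUntil _) hjun2
      have houter : ∀ y, y ∈ ((P.takeUntil (t i1) (htsup i1)).append (F i1).reverse).support →
          y ∈ ((F i2).append (P.dropUntil (t i2) (htsup i2))).support → y = x := by
        intro y hy1 hy2
        rw [Walk.mem_support_append_iff] at hy1 hy2
        rcases hy1 with hy1 | hy1
        · have hyP : y ∈ P.support := Walk.support_takeUntil_subset _ _ hy1
          have hidx1 : P.support.idxOf y ≤ q1 := by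
            have h2 : P.support.idxOf (t i1) = q1 := hi1
            have h3 := ((until_facts P hP (htsup i1)).1 y hyP).mp hy1
            omega
          rcases hy2 with hy2 | hy2
          · exfalso
            have hyt2 : y = t i2 := hFonly i2 y hy2 hyP
            have h4 : P.support.idxOf y = q2 := by rw [hyt2]; exact hi2
            omega
          · exfalso
            have h2 : P.support.idxOf (t i2) = q2 := hi2
            have h3 := ((until_facts P hP (htsup i2)).2 y hyP).mp hy2
            omega
        · rw [Walk.support_reverse, List.mem_reverse] at hy1
          rcases hy2 with hy2 | hy2
          · exact hFpair i1 i2 hi12 y hy1 hy2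
          · exfalso
            have hyP : y ∈ P.support := Walk.support_dropUntil_subset _ _ hy2
            have hyt1 : y = t i1 := hFonly i1 y hy1 hyP
            have hidx1 : P.support.idxOf y = q1 := by rw [hyt1]; exact hi1
            have h2 : P.support.idxOf (t i2) = q2 := hi2
            have h3 := ((until_facts P hP (htsup i2)).2 y hyP).mp hy2
            omega
      refine recurse (((P.takeUntil (t i1) (htsup i1)).append (F i1).reverse).append
        ((F i2).append (P.dropUntil (t i2) (htsup i2))))
        (isPath_append hW1path hW2path houter) ?_ ?_
      · rw [Walk.mem_support_append_iff]
        left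
        exact Walk.end_mem_support _
      · intro y hyB hyP
        rw [Walk.mem_support_append_iff]
        have hyBL := (hmemBL y).mpr ⟨hyP, hyB⟩
        by_cases hcase : P.support.idxOf y ≤ q1
        · left
          rw [Walk.mem_support_append_iff]
          left
          refine ((until_facts P hP (htsup i1)).1 y hyP).mpr ?_
          have h2 : P.support.idxOf (t i1) = q1 := hi1
          omega
        · right
          rw [Walk.mem_support_append_iff]
          right
          refine ((until_facts P hP (htsup i2)).2 y hyP).mpr ?_
          have h2 : P.support.idxOf (t i2) = q2 := hi2
          have h3 := hnob y hyBL
          omega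
    · -- pigeonhole contradiction
      exfalso
      push_neg at hc hb hgap
      obtain ⟨b1, hb1BL, hb1⟩ := hc
      obtain ⟨b2, hb2BL, hb2⟩ := hb
      have hwitAll : ∀ q : ℕ, ∃ b' : V, q ∈ PosF → (b' ∈ BL ∧ q < P.support.idxOf b' ∧
          ∀ p ∈ PosF, q < p → P.support.idxOf b' < p) := by
        intro q
        by_cases hq : q ∈ PosF
        · by_cases hqM : q = PosF.max' hPosFne
          · refine ⟨b1, fun _ => ⟨hb1BL, by omega, ?_⟩⟩
            intro p hp hqp
            have := PosF.le_max' p hp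
            omega
          · have hqlt : q < PosF.max' hPosFne := lt_of_le_of_ne (PosF.le_max' q hq) hqM
            have hFqne : (PosF.filter (fun p => q < p)).Nonempty :=
              ⟨PosF.max' hPosFne, Finset.mem_filter.mpr ⟨PosF.max'_mem _, hqlt⟩⟩
            set nq := (PosF.filter (fun p => q < p)).min' hFqne with hnq
            have hnqmem := Finset.mem_filter.mp ((PosF.filter (fun p => q < p)).min'_mem hFqne)
            have hmid : ∀ p ∈ PosF, q < p → nq ≤ p := by
              intro p hp hqp
              by_contra hcon
              push_neg at hcon
              have hpF : p ∈ PosF.filter (fun p => q < p) := Finset.mem_filter.mpr ⟨hp, hqp⟩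
              have := Finset.min'_le _ p hpF
              omega
            obtain ⟨b', hb'BL, hb'⟩ := hgap q hq nq hnqmem.1 hnqmem.2 hmid
            refine ⟨b', fun _ => ⟨hb'BL, hb'.1, ?_⟩⟩
            intro p hp hqp
            have := hmid p hp hqp
            omega
        · exact ⟨x, fun h => absurd h hq⟩
      choose wit hwit using hwitAll
      have hmaps : ∀ q ∈ PosF, wit q ∈ BL.erase b2 := by
        intro q hq
        obtain ⟨h1, h2, _⟩ := hwit q hq
        refine Finset.mem_erase.mpr ⟨?_, h1⟩
        intro he
        have hmq := PosF.min'_le q hq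
        rw [he] at h2
        omega
      have hinjOn : Set.InjOn wit PosF := by
        intro q1 h1 q2 h2 he
        by_contra hne
        rcases lt_trichotomy q1 q2 with hh | hh | hh
        · obtain ⟨_, hlt1, hbound1⟩ := hwit q1 h1
          obtain ⟨_, hlt2, _⟩ := hwit q2 h2
          have := hbound1 q2 h2 hh
          rw [he] at this
          omega
        · exact hne hh
        · obtain ⟨_, hlt1, _⟩ := hwit q1 h1
          obtain ⟨_, hlt2, hbound2⟩ := hwit q2 h2
          have := hbound2 q1 h1 hh
          rw [← he] at this
          omega
      have hcard1 := Finset.card_le_card_of_injOn wit hmaps hinjOn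
      rw [Finset.card_erase_of_mem hb2BL] at hcard1
      have hBLle : BL.card ≤ P.support.length := by
        calc BL.card ≤ P.support.toFinset.card := Finset.card_filter_le _ _
        _ = P.support.length := List.toFinset_card_of_nodup hP.support_nodup
      have hUL : ({y | y ∈ P.support} : Set V).ncard = P.support.length := by
        have hset : ({y | y ∈ P.support} : Set V) = ↑P.support.toFinset := by
          ext y
          simp [List.mem_toFinset]
        rw [hset, Set.ncard_coe_finset, List.toFinset_card_of_nodup hP.support_nodup]
      have hxBL : x ∉ BL := fun h => hxP' ((hmemBL x).mp h).1
      have hBcard : BL.card + 1 ≤ B.ncard := by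
        have hsub2 : ↑(insert x BL) ⊆ B := by
          intro y hy
          rw [Finset.coe_insert, Set.mem_insert_iff] at hy
          rcases hy with rfl | hy
          · exact hxB
          · exact ((hmemBL y).mp hy).2
        have := Set.ncard_le_ncard hsub2 (Set.toFinite _)
        rw [Set.ncard_coe_finset, Finset.card_insert_of_notMem hxBL] at this
        omega
      rcases Nat.lt_or_ge ({y | y ∈ P.support} : Set V).ncard k with hUk | hUk
      · rw [Nat.min_eq_right (le_of_lt hUk)] at hPosFcard
        omega
      · rw [Nat.min_eq_left hUk] at hPosFcard
        omega


lemma extend_core [Fintype V] {T : SimpleGraph V} (hT : T ≤ G) (hTconn : T.Connected)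
    {u v : V} {P : G.Walk u v}
    (hbr : ∀ y, 2 < (T.neighborSet y).ncard → y ∈ P.support) :
    ∀ (m : ℕ) (H : SimpleGraph V) (W : Set V),
      (Set.univ \ W).ncard = m →
      H ≤ G → (∀ p q, H.Adj p q → p ∈ W ∧ q ∈ W) → H.IsAcyclic →
      (∀ y ∈ W, H.Reachable u y) → ({y | y ∈ P.support} ⊆ W) →
      (∀ e ∈ P.edges, e ∈ H.edgeSet) →
      (∀ y ∈ W, y ∉ P.support →
        (H.neighborSet y).ncard + ((T.neighborSet y) \ W).ncard ≤ 2) →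
      ∃ H' : SimpleGraph V, H' ≤ G ∧ H'.IsTree ∧
        (∀ y, y ∉ P.support → (H'.neighborSet y).ncard ≤ 2) ∧
        (∀ e ∈ P.edges, e ∈ H'.edgeSet) := by
  intro m
  induction m with
  | zero =>
    intro H W hm hHG hinW hacy hreach hsupW hedges hdeg
    have hWuniv : W = Set.univ := by
      have h0 := (Set.ncard_eq_zero (Set.toFinite _)).mp hm
      apply Set.eq_univ_of_univ_subset
      intro y _
      by_contra hy
      have : y ∈ Set.univ \ W := ⟨Set.mem_univ y, hy⟩
      rw [h0] at this
      exact this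
    subst hWuniv
    refine ⟨H, hHG, ⟨?_, hacy⟩, ?_, hedges⟩
    · rw [connected_iff]
      refine ⟨fun a b => ?_, ⟨u⟩⟩
      exact (hreach a (Set.mem_univ a)).symm.trans (hreach b (Set.mem_univ b))
    · intro y hy
      have h1 := hdeg y (Set.mem_univ y) hy
      omega
  | succ m ih =>
    intro H W hm hHG hinW hacy hreach hsupW hedges hdeg
    classical
    have hne : (Set.univ \ W).Nonempty := by
      rw [← Set.ncard_pos (Set.toFinite _), hm]; omega
    obtain ⟨z, _, hzW⟩ := hne
    obtain ⟨w0⟩ : T.Reachable u z := hTconn.preconnected u z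
    have hp0 : w0.bypass.IsPath := Walk.bypass_isPath w0
    obtain ⟨c, w', hcWc, hsubx, _, honly, hpath⟩ :=
      exists_firstHit (S := (Wᶜ : Set V)) w0.bypass
        ⟨z, Walk.end_mem_support _, hzW⟩
    have hcW' : c ∉ W := hcWc
    have hu : u ∈ W := hsupW (Walk.start_mem_support P)
    have huc : c ≠ u := fun h => hcW' (h ▸ hu)
    obtain ⟨x, hadx, q, hq⟩ := Walk.exists_eq_cons_of_ne huc w'.reverse
    have hxsupp : x ∈ w'.support := by
      have hh : x ∈ w'.reverse.support := by rw [hq]; simp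
      rwa [Walk.support_reverse, List.mem_reverse] at hh
    have hxc : x ≠ c := by
      have hrp : w'.reverse.IsPath := (hpath hp0).reverse
      rw [hq, Walk.cons_isPath_iff] at hrp
      intro h
      exact hrp.2 (h ▸ q.start_mem_support)
    have hxW : x ∈ W := by
      by_contra hxW
      exact hxc (honly x hxsupp hxW)
    have hTadj : T.Adj x c := hadx.symm
    have hGadj : G.Adj x c := hT hTadj
    set H' := H ⊔ fromEdgeSet {s(x, c)} with hH'def
    have hH'adj : ∀ p q, H'.Adj p q ↔ H.Adj p q ∨ ((p = x ∧ q = c) ∨ (p = c ∧ q = x)) := by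
      intro p q
      rw [hH'def, sup_adj, fromEdgeSet_adj]
      constructor
      · rintro (h | ⟨h1, h2⟩)
        · exact Or.inl h
        · right
          simp only [Set.mem_singleton_iff, Sym2.eq, Sym2.rel_iff', Prod.mk.injEq,
            Prod.swap_prod_mk] at h1
          tauto
      · rintro (h | (⟨rfl, rfl⟩ | ⟨rfl, rfl⟩))
        · exact Or.inl h
        · exact Or.inr ⟨rfl, fun h => hcW' (h ▸ hxW)⟩
        · exact Or.inr ⟨by rw [Set.mem_singleton_iff, Sym2.eq_swap], fun h => hcW' (h.symm ▸ hxW)⟩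
    have hcnotP : c ∉ P.support := fun h => hcW' (hsupW h)
    have hm' : (Set.univ \ (W ∪ {c})).ncard = m := by
      have heq : Set.univ \ (W ∪ {c}) = (Set.univ \ W) \ {c} := by rw [Set.diff_diff]
      have hcmem : c ∈ Set.univ \ W := ⟨Set.mem_univ c, hcW'⟩
      rw [heq, Set.ncard_diff_singleton_of_mem hcmem, hm]
      omega
    refine ih H' (W ∪ {c}) hm' ?_ ?_ ?_ ?_ ?_ ?_ ?_
    · intro a b hab
      rcases (hH'adj a b).mp hab with h | (⟨rfl, rfl⟩ | ⟨rfl, rfl⟩)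
      · exact hHG h
      · exact hGadj
      · exact hGadj.symm
    · intro p q' hpq
      rcases (hH'adj p q').mp hpq with h | (⟨rfl, rfl⟩ | ⟨rfl, rfl⟩)
      · exact ⟨Or.inl (hinW p q' h).1, Or.inl (hinW p q' h).2⟩
      · exact ⟨Or.inl hxW, Or.inr rfl⟩
      · exact ⟨Or.inr rfl, Or.inl hxW⟩
    · exact pendant_acyclic hacy hxc (fun q' hq' => hcW' (hinW c q' hq').1)
    · intro y hy
      rcases hy with hy | hy
      · exact (hreach y hy).mono le_sup_left
      · rw [Set.mem_singleton_iff] at hy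
        subst hy
        have hadj' : H'.Adj x y := (hH'adj x y).mpr (Or.inr (Or.inl ⟨rfl, rfl⟩))
        exact ((hreach x hxW).mono le_sup_left).trans hadj'.reachable
    · exact hsupW.trans Set.subset_union_left
    · exact fun e he => (edgeSet_mono le_sup_left) (hedges e he)
    · intro y hy hyP
      rcases hy with hy | hy
      · by_cases hyx : y = x
        · obtain rfl := hyx.symm
          have hxdeg := hdeg x hy hyP
          have h1 : H'.neighborSet x = insert c (H.neighborSet x) := by
            ext q'
            simp only [mem_neighborSet, Set.mem_insert_iff]
            rw [hH'adj]
            constructor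
            · rintro (h | (⟨_, rfl⟩ | ⟨h1, h2⟩))
              · exact Or.inr h
              · exact Or.inl rfl
              · exact absurd h1 hxc
            · rintro (rfl | h)
              · exact Or.inr (Or.inl ⟨rfl, rfl⟩)
              · exact Or.inl h
          have hcH : c ∉ H.neighborSet x := fun h => hcW' (hinW x c h).2
          have h2 : (H'.neighborSet x).ncard = (H.neighborSet x).ncard + 1 := by
            rw [h1, Set.ncard_insert_of_notMem hcH (Set.toFinite _)]
          have h3 : T.neighborSet x \ (W ∪ {c}) = (T.neighborSet x \ W) \ {c} := by
            rw [Set.diff_diff]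
          have hcmem : c ∈ T.neighborSet x \ W := ⟨hTadj, hcW'⟩
          have h4 : (T.neighborSet x \ (W ∪ {c})).ncard = (T.neighborSet x \ W).ncard - 1 := by
            rw [h3, Set.ncard_diff_singleton_of_mem hcmem]
          have h5 : 1 ≤ (T.neighborSet x \ W).ncard :=
            (Set.ncard_pos (Set.toFinite _)).mpr ⟨c, hcmem⟩
          omega
        · have h1 : H'.neighborSet y = H.neighborSet y := by
            ext q'
            simp only [mem_neighborSet]
            rw [hH'adj]
            constructor
            · rintro (h | (⟨rfl, rfl⟩ | ⟨rfl, rfl⟩))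
              · exact h
              · exact absurd rfl hyx
              · exact absurd hy hcW'
            · exact fun h => Or.inl h
          have h2 : T.neighborSet y \ (W ∪ {c}) ⊆ T.neighborSet y \ W :=
            Set.diff_subset_diff_right Set.subset_union_left
          have h3 := Set.ncard_le_ncard h2 (Set.toFinite _)
          have h4 := hdeg y hy hyP
          rw [h1]
          omega
      · rw [Set.mem_singleton_iff] at hy
        obtain rfl := hy.symm
        have h1 : H'.neighborSet c = {x} := by
          ext q'
          simp only [mem_neighborSet, Set.mem_singleton_iff]
          rw [hH'adj]
          constructor
          · rintro (h | (⟨h1, h2⟩ | ⟨h1, h2⟩))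
            · exact absurd h (fun hh => hcW' (hinW c q' hh).1)
            · exact absurd h1.symm hxc
            · exact h2
          · rintro rfl
            exact Or.inr (Or.inr ⟨rfl, rfl⟩)
        have h2 : (H'.neighborSet c).ncard = 1 := by rw [h1, Set.ncard_singleton]
        have h3 : T.neighborSet c \ (W ∪ {c}) ⊆ T.neighborSet c \ {x} := by
          apply Set.diff_subset_diff_right
          intro t ht
          rw [Set.mem_singleton_iff] at ht
          exact Or.inl (ht ▸ hxW)
        have h4 : (T.neighborSet c \ {x}).ncard = (T.neighborSet c).ncard - 1 := by
          rw [Set.ncard_diff_singleton_of_mem (by exact hadx : x ∈ T.neighborSet c)]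
        have h5 : (T.neighborSet c).ncard ≤ 2 := by
          by_contra h
          push_neg at h
          exact hcnotP (hbr c (by omega))
        have h6 := Set.ncard_le_ncard h3 (Set.toFinite _)
        omega

lemma build_caterpillar [Fintype V] {T : SimpleGraph V} (hT : T ≤ G) (htree : T.IsTree)
    {u v : V} (P : G.Walk u v) (hP : P.IsPath)
    (hcov : ∀ y, 2 < (T.neighborSet y).ncard → y ∈ P.support) : HasSGC G := by
  obtain ⟨H0, hH0G, hacy, hin, hreach, hedges⟩ := base_graph P hP
  obtain ⟨H', hG', htree', hdeg', hedges'⟩ :=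
    extend_core hT htree.isConnected hcov (Set.univ \ {y | y ∈ P.support}).ncard H0
      {y | y ∈ P.support} rfl hH0G (fun p q h => hin p q h) hacy (fun y hy => hreach y hy)
      (fun y hy => hy) hedges (fun y hy hyP => absurd hy hyP)
  refine ⟨H', hG', htree', u, v, P.transfer H' hedges', ?_, ?_⟩
  · rw [Walk.isPath_def, Walk.support_transfer]
    exact hP.support_nodup
  · intro w hw
    rw [Walk.support_transfer]
    by_contra h
    have h1 := hdeg' w h
    have h2 : 2 < (H'.neighborSet w).ncard := hw
    omega



lemma avoid_walk_of_deleteConnected {k : ℕ}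
    (hk : ∀ S : Set V, S.ncard < k → ((⊤ : G.Subgraph).deleteVerts S).coe.Connected) :
    ∀ S : Set V, S.ncard < k → ∀ a b : V, a ∉ S → b ∉ S →
      ∃ w : G.Walk a b, ∀ y ∈ w.support, y ∉ S := by
  intro S hS a b ha hb
  have hc := hk S hS
  have haH : a ∈ ((⊤ : G.Subgraph).deleteVerts S).verts := ⟨trivial, ha⟩
  have hbH : b ∈ ((⊤ : G.Subgraph).deleteVerts S).verts := ⟨trivial, hb⟩
  obtain ⟨wc⟩ := hc.preconnected ⟨a, haH⟩ ⟨b, hbH⟩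
  refine ⟨wc.map (Subgraph.hom _), ?_⟩
  intro y hy
  replace hy : y ∈ (wc.map (Subgraph.hom ((⊤ : G.Subgraph).deleteVerts S))).support := hy
  rw [Walk.support_map, List.mem_map] at hy
  obtain ⟨z, hz, rfl⟩ := hy
  exact z.2.2

end SGCaux

/-- If a connected graph `G` has a spanning tree with at most `κ(G)` branch vertices,
then `G` has a spanning generalized caterpillar. -/
theorem stmt7 {V : Type*} [Fintype V] (G : SimpleGraph V) (hG : G.Connected)
    (T : SimpleGraph V) (hT : T ≤ G) (htree : T.IsTree)
    (hbranch : (branchVerts T).ncard ≤ kappa G) :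
    HasSGC G := by
  classical
  have hne : Nonempty V := hG.nonempty
  have hkconn : IsKConnected G (kappa G) := by
    have h0 : 0 ∈ {k | IsKConnected G k} :=
      ⟨Nat.card_pos, fun S hS => absurd hS (by omega)⟩
    have hbdd : BddAbove {k | IsKConnected G k} := ⟨Nat.card V, fun k hk => le_of_lt hk.1⟩
    exact Nat.sSup_mem ⟨0, h0⟩ hbdd
  have hH := SGCaux.avoid_walk_of_deleteConnected (G := G) (k := kappa G)
    (fun S hS => hkconn.2 S hS)
  by_cases hB0 : branchVerts T = ∅
  · obtain ⟨u0⟩ := hne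
    refine SGCaux.build_caterpillar hT htree (Walk.nil : G.Walk u0 u0) Walk.IsPath.nil ?_
    intro y hy
    have hmem : y ∈ branchVerts T := hy
    rw [hB0] at hmem
    exact hmem.elim
  · obtain ⟨x0, hx0⟩ := Set.nonempty_iff_ne_empty.mpr hB0
    obtain ⟨u', v', P', hP', hcov⟩ := SGCaux.insert_all hH hbranch
      ((branchVerts T \ {y | y ∈ (Walk.nil : G.Walk x0 x0).support}).ncard)
      (Walk.nil : G.Walk x0 x0) Walk.IsPath.nil rfl
    exact SGCaux.build_caterpillar hT htree P' hP' (fun y hy => hcov y hy)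
end

section
/- For every positive integer m, there exists a connected graph G with independence number α(G) = (2m+1)(m+2) and connectivity κ(G) = m that has no spanning generalized caterpillar. -/
open SimpleGraph

/- ### Auxiliary development -/

abbrev CGV (m : ℕ) := Fin m ⊕ (Fin (m + 2) × (Fin (2 * m + 1) ⊕ Fin m))

def pIdx {m : ℕ} : CGV m → Option (Fin (m + 2)) :=
  Sum.elim (fun _ => none) (fun p => some p.1)

variable {m : ℕ}

lemma adj_pIdx {x y : CGV m} (h : (ConstructionGraph m).Adj x y) :
    pIdx x = pIdx y ∨ pIdx x = none ∨ pIdx y = none := by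
  rcases x with s | ⟨i, b | a⟩ <;> rcases y with s' | ⟨i', b' | a'⟩ <;>
    simp_all [ConstructionGraph, pIdx]

def inlCnt (l : List (CGV m)) : ℕ := (l.filter (fun x => x.isLeft)).length

noncomputable def piecesOf (l : List (CGV m)) : Finset (Option (Fin (m + 2))) :=
  (l.map pIdx).toFinset.erase none

lemma walk_pieces_bound {T : SimpleGraph (CGV m)} (hT : T ≤ ConstructionGraph m)
    {u v : CGV m} (p : T.Walk u v) :
    (piecesOf p.support).card + (if pIdx u = none then 1 else 0) ≤ inlCnt p.support + 1 := by
  classical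
  induction p with
  | nil =>
    rename_i w
    rcases w with s | ⟨i, x⟩ <;> simp [piecesOf, inlCnt, pIdx]
  | cons h q ih =>
    rename_i a b c
    rw [Walk.support_cons]
    rcases a with s | ⟨i, x⟩
    · -- head is inl
      have h1 : piecesOf ((Sum.inl s : CGV m) :: q.support) = piecesOf q.support := by
        simp only [piecesOf, List.map_cons, List.toFinset_cons]
        rw [show pIdx (Sum.inl s : CGV m) = none from rfl, Finset.erase_insert_eq_erase]
      have h2 : inlCnt ((Sum.inl s : CGV m) :: q.support) = inlCnt q.support + 1 := by
        simp [inlCnt, List.filter_cons]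
      rw [h1, h2, if_pos (show pIdx (Sum.inl s : CGV m) = none from rfl)]
      have key : (piecesOf q.support).card ≤ inlCnt q.support + 1 := by
        split at ih <;> omega
      omega
    · -- head is inr (i, x)
      have h1 : piecesOf ((Sum.inr (i, x) : CGV m) :: q.support)
          = insert (some i) (piecesOf q.support) := by
        simp only [piecesOf, List.map_cons, List.toFinset_cons]
        rw [show pIdx (Sum.inr (i, x) : CGV m) = some i from rfl,
          Finset.erase_insert_of_ne (by simp)]
      have h2 : inlCnt ((Sum.inr (i, x) : CGV m) :: q.support) = inlCnt q.support := by
        simp [inlCnt, List.filter_cons]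
      rw [h1, h2, if_neg (show ¬ pIdx (Sum.inr (i, x) : CGV m) = none by simp [pIdx])]
      rcases adj_pIdx (hT h) with heq | hnone | hnone
      · -- pIdx b = some i
        have hbs : pIdx b = some i := by
          rw [← heq]; rfl
        have hb : some i ∈ piecesOf q.support := by
          simp only [piecesOf, Finset.mem_erase]
          refine ⟨by simp, ?_⟩
          rw [List.mem_toFinset, ← hbs]
          exact List.mem_map_of_mem (f := pIdx) q.start_mem_support
        rw [Finset.insert_eq_self.2 hb]
        rw [if_neg (by simp [hbs])] at ih
        omega
      · exact absurd hnone (by simp [pIdx])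
      · rw [if_pos hnone] at ih
        have hc := Finset.card_insert_le (some i) (piecesOf q.support)
        omega

lemma exists_parent {V : Type} {T : SimpleGraph V} (hc : T.Connected) {r v : V}
    (hv : v ≠ r) : ∃ u, T.Adj v u ∧ T.dist u r + 1 = T.dist v r := by
  obtain ⟨p, hp⟩ := hc.exists_walk_length_eq_dist v r
  cases p with
  | nil => exact absurd rfl hv
  | cons h q =>
    rename_i w
    refine ⟨w, h, ?_⟩
    have h1 : T.dist w r ≤ q.length := dist_le q
    have h2 : T.dist v r ≤ T.dist v w + T.dist w r := hc.dist_triangle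
    have h3 : T.dist v w ≤ 1 := by
      have := dist_le h.toWalk
      simpa using this
    have h4 : q.length + 1 = T.dist v r := by
      rw [← hp]; simp [Walk.length_cons]
    omega

/-- Step A: every connected spanning subgraph of the construction graph has a
branch vertex in the A-side of each piece. -/
lemma exists_branch_in_piece (hm : 1 ≤ m) {T : SimpleGraph (CGV m)}
    (hT : T ≤ ConstructionGraph m) (hc : T.Connected) (i : Fin (m + 2)) :
    ∃ a : Fin m, Sum.inr (i, Sum.inr a) ∈ branchVerts T := by
  classical
  by_contra hno
  push_neg at hno
  simp only [branchVerts, Set.mem_setOf_eq, not_lt] at hno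
  set r : CGV m := Sum.inl ⟨0, hm⟩ with hr
  -- the non-special B vertices of piece i
  have hbv : ∀ j : Fin (m + 1), ∃ a : Fin m,
      T.Adj (Sum.inr (i, Sum.inl ⟨m + (j : ℕ), by omega⟩)) (Sum.inr (i, Sum.inr a)) ∧
      T.dist (Sum.inr (i, Sum.inr a)) r + 1
        = T.dist (Sum.inr (i, Sum.inl ⟨m + (j : ℕ), by omega⟩)) r := by
    intro j
    set vb : CGV m := Sum.inr (i, Sum.inl ⟨m + (j : ℕ), by omega⟩) with hvb
    obtain ⟨u, hadj, hdist⟩ := exists_parent hc (show vb ≠ r by simp [hvb, hr])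
    have hG := hT hadj
    -- u must be an A vertex of piece i
    rcases u with s | ⟨i', b' | a'⟩
    · exfalso
      have : (m + (j : ℕ)) < m := by
        simpa [ConstructionGraph, hvb] using hG
      omega
    · exfalso; simp [ConstructionGraph, hvb] at hG
    · have hii : i = i' := by simpa [ConstructionGraph, hvb] using hG
      subst hii
      exact ⟨a', hadj, hdist⟩
  choose F hFadj hFdist using hbv
  have hinj : Function.Injective F := by
    intro j1 j2 hFeq
    by_contra hne
    set a := F j1 with ha
    set va : CGV m := Sum.inr (i, Sum.inr a) with hva
    set vb1 : CGV m := Sum.inr (i, Sum.inl ⟨m + (j1 : ℕ), by omega⟩) with hvb1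
    set vb2 : CGV m := Sum.inr (i, Sum.inl ⟨m + (j2 : ℕ), by omega⟩) with hvb2
    obtain ⟨pa, hpaadj, hpadist⟩ := exists_parent hc (show va ≠ r by simp [hva, hr])
    have hd1 : T.dist va r + 1 = T.dist vb1 r := hFdist j1
    have hd2 : T.dist va r + 1 = T.dist vb2 r := by
      have := hFdist j2; rw [← hFeq] at this; exact this
    have hpane1 : pa ≠ vb1 := by
      intro hh; rw [hh] at hpadist; omega
    have hpane2 : pa ≠ vb2 := by
      intro hh; rw [hh] at hpadist; omega
    have hb12 : vb1 ≠ vb2 := by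
      simp only [hvb1, hvb2]
      intro hh
      apply hne
      have := (Sum.inr_injective (α := Fin m)) hh
      have := (Prod.ext_iff.1 this).2
      have := Sum.inl_injective this
      have : m + (j1 : ℕ) = m + (j2 : ℕ) := by
        simpa [Fin.ext_iff] using this
      exact Fin.ext (by omega)
    -- three distinct neighbors of va
    have hsub : ({vb1, vb2, pa} : Set (CGV m)) ⊆ T.neighborSet va := by
      intro x hx
      rcases hx with rfl | rfl | rfl
      · exact (hFadj j1).symm
      · have := (hFadj j2).symm; rw [← hFeq] at this; exact this
      · exact hpaadj
    have h3 : ({vb1, vb2, pa} : Set (CGV m)).ncard = 3 := by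
      rw [Set.ncard_insert_of_notMem (by
            simp only [Set.mem_insert_iff, Set.mem_singleton_iff]
            push_neg
            exact ⟨hb12, fun h => hpane1 h.symm⟩) (Set.toFinite _),
        Set.ncard_insert_of_notMem (by simp [hpane2.symm]) (Set.toFinite _),
        Set.ncard_singleton]
    have hle := Set.ncard_le_ncard hsub (Set.toFinite _)
    have hno' : (T.neighborSet va).ncard ≤ 2 := hno a
    omega
  have := Fintype.card_le_of_injective F hinj
  simp [Fintype.card_fin] at this

lemma exists_survivor {k : ℕ} {S' : Set (CGV m)} (h : S'.ncard < k)
    (f : Fin k → CGV m) (hf : Function.Injective f) : ∃ j, f j ∉ S' := by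
  by_contra hcon
  push_neg at hcon
  have hsub : Set.range f ⊆ S' := by rintro x ⟨j, rfl⟩; exact hcon j
  have h1 : (Set.range f).ncard = k := by
    rw [← Set.image_univ, Set.ncard_image_of_injective _ hf, Set.ncard_univ,
      Nat.card_eq_fintype_card, Fintype.card_fin]
  have := Set.ncard_le_ncard hsub (Set.toFinite _)
  omega

lemma adj_S_t (hm : 1 ≤ m) (s : Fin m) (i : Fin (m + 2)) {b : Fin (2 * m + 1)}
    (hb : (b : ℕ) < m) : (ConstructionGraph m).Adj (Sum.inl s) (Sum.inr (i, Sum.inl b)) := by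
  simp [ConstructionGraph, hb]

lemma adj_B_A (i : Fin (m + 2)) (b : Fin (2 * m + 1)) (a : Fin m) :
    (ConstructionGraph m).Adj (Sum.inr (i, Sum.inl b)) (Sum.inr (i, Sum.inr a)) := by
  simp [ConstructionGraph]

lemma construction_connected (hm : 1 ≤ m) : (ConstructionGraph m).Connected := by
  have : Nonempty (CGV m) := ⟨Sum.inl ⟨0, hm⟩⟩
  rw [connected_iff]
  refine ⟨fun x y => ?_, this⟩
  set s0 : Fin m := ⟨0, hm⟩
  have key : ∀ x : CGV m, (ConstructionGraph m).Reachable x (Sum.inl s0) := by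
    intro x
    have ht : ∀ i : Fin (m + 2), (ConstructionGraph m).Adj
        (Sum.inr (i, Sum.inl ⟨0, by omega⟩)) (Sum.inl s0) :=
      fun i => (adj_S_t hm s0 i (by simp; omega)).symm
    rcases x with s | ⟨i, b | a⟩
    · exact ((adj_S_t hm s ⟨0, by omega⟩ (show ((⟨0, by omega⟩ : Fin (2*m+1)) : ℕ) < m
        by simp; omega)).reachable).trans (ht _).reachable
    · refine (Adj.reachable ?_).trans (((adj_B_A i ⟨0, by omega⟩ ⟨0, hm⟩).symm.reachable).trans
        (ht i).reachable)
      exact adj_B_A i b ⟨0, hm⟩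
    · exact ((adj_B_A i ⟨0, by omega⟩ a).symm.reachable).trans (ht i).reachable
  exact (key x).trans (key y).symm

lemma delete_connected (hm : 1 ≤ m) {S' : Set (CGV m)} (h : S'.ncard < m) :
    DeleteConnected (ConstructionGraph m) S' := by
  classical
  set G := ConstructionGraph m
  -- survivors
  obtain ⟨st, hst⟩ := exists_survivor h (fun s : Fin m => (Sum.inl s : CGV m))
    (fun a b hab => by simpa using hab)
  have htj : ∀ i : Fin (m + 2), ∃ j : Fin m,
      (Sum.inr (i, Sum.inl ⟨(j : ℕ), by omega⟩) : CGV m) ∉ S' := by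
    intro i
    exact exists_survivor h (fun j : Fin m => (Sum.inr (i, Sum.inl ⟨(j:ℕ), by omega⟩) : CGV m))
      (fun a b hab => by
        simp only [Sum.inr.injEq, Prod.mk.injEq, Sum.inl.injEq, Fin.mk.injEq, true_and] at hab
        exact Fin.ext hab)
  choose tj htjmem using htj
  have haj : ∀ i : Fin (m + 2), ∃ j : Fin m, (Sum.inr (i, Sum.inr j) : CGV m) ∉ S' := by
    intro i
    exact exists_survivor h (fun j : Fin m => (Sum.inr (i, Sum.inr j) : CGV m))
      (fun a b hab => by simpa using hab)
  choose aj hajmem using haj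
  set H := ((⊤ : G.Subgraph).deleteVerts S').coe
  have hmemv : ∀ x : CGV m, x ∉ S' → x ∈ ((⊤ : G.Subgraph).deleteVerts S').verts := by
    intro x hx; simp [hx]
  have cadj : ∀ {x y : CGV m} (hx : x ∈ ((⊤ : G.Subgraph).deleteVerts S').verts)
      (hy : y ∈ ((⊤ : G.Subgraph).deleteVerts S').verts), G.Adj x y →
      H.Adj ⟨x, hx⟩ ⟨y, hy⟩ := by
    intro x y hx hy hadj
    simp only [H, Subgraph.coe_adj, Subgraph.deleteVerts_adj]
    simp only [Subgraph.deleteVerts_verts, Subgraph.verts_top, Set.mem_diff,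
      Set.mem_univ, true_and] at hx hy
    simp [hx, hy, hadj]
  have : Nonempty ↑((⊤ : G.Subgraph).deleteVerts S').verts := ⟨⟨_, hmemv _ hst⟩⟩
  rw [DeleteConnected, connected_iff]
  refine ⟨fun x y => ?_, this⟩
  have key : ∀ x : ↑((⊤ : G.Subgraph).deleteVerts S').verts,
      H.Reachable x ⟨Sum.inl st, hmemv _ hst⟩ := by
    rintro ⟨x, hx⟩
    have hxS : x ∉ S' := by
      simp only [Subgraph.deleteVerts_verts, Subgraph.verts_top, Set.mem_diff,
        Set.mem_univ, true_and] at hx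
      exact hx
    have htadj : ∀ i : Fin (m + 2), H.Adj ⟨_, hmemv _ (htjmem i)⟩ ⟨_, hmemv _ hst⟩ := by
      intro i
      exact cadj _ _ ((adj_S_t hm st i (by simp)).symm)
    rcases x with s | ⟨i, b | a⟩
    · -- inl s : go via surviving t of piece 0
      refine ((cadj hx (hmemv _ (htjmem ⟨0, by omega⟩)) ?_).reachable).trans
        (htadj ⟨0, by omega⟩).reachable
      exact adj_S_t hm s _ (by simp)
    · -- B vertex: via surviving A vertex, surviving t
      refine ((cadj hx (hmemv _ (hajmem i)) (adj_B_A i b (aj i))).reachable).trans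
        (((cadj (hmemv _ (hajmem i)) (hmemv _ (htjmem i))
          ((adj_B_A i _ (aj i)).symm)).reachable).trans (htadj i).reachable)
    · -- A vertex: via surviving t
      exact ((cadj hx (hmemv _ (htjmem i)) ((adj_B_A i _ a).symm)).reachable).trans
        (htadj i).reachable
  exact (key x).trans (key y).symm

lemma ncard_range_inl : (Set.range (Sum.inl : Fin m → CGV m)).ncard = m := by
  rw [← Set.image_univ, Set.ncard_image_of_injective _ Sum.inl_injective, Set.ncard_univ,
    Nat.card_eq_fintype_card, Fintype.card_fin]

lemma not_delete_connected (hm : 1 ≤ m) :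
    ¬ DeleteConnected (ConstructionGraph m) (Set.range (Sum.inl : Fin m → CGV m)) := by
  classical
  intro hcon
  set G := ConstructionGraph m
  set S' : Set (CGV m) := Set.range (Sum.inl : Fin m → CGV m)
  have hmem : ∀ (i : Fin (m + 2)) (x : Fin (2*m+1) ⊕ Fin m),
      (Sum.inr (i, x) : CGV m) ∈ ((⊤ : G.Subgraph).deleteVerts S').verts := by
    intro i x; simp [S']
  set H := ((⊤ : G.Subgraph).deleteVerts S').coe
  have inv : ∀ {x y : ↑((⊤ : G.Subgraph).deleteVerts S').verts}, H.Reachable x y →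
      ∀ i j a b, x.1 = Sum.inr (i, a) → y.1 = Sum.inr (j, b) → i = j := by
    intro x y hr
    obtain ⟨w⟩ := hr
    induction w with
    | nil =>
      rintro i j a b h1 h2
      rw [h1] at h2
      exact (Prod.ext_iff.1 (Sum.inr_injective h2)).1
    | cons hadj q ih =>
      rename_i x' y' z'
      intro i j a b h1 h2
      -- middle vertex y' is not inl since it's in verts
      have hy' : y'.1 ∉ S' := by
        have := y'.2
        simp only [Subgraph.deleteVerts_verts, Subgraph.verts_top, Set.mem_diff,
          Set.mem_univ, true_and] at this
        exact this
      rcases hy : y'.1 with s | ⟨i', c⟩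
      · exact absurd (show y'.1 ∈ S' from hy ▸ ⟨s, rfl⟩) hy'
      · have hGadj : G.Adj x'.1 y'.1 := by
          have := hadj
          simp only [H, Subgraph.coe_adj, Subgraph.deleteVerts_adj] at this
          exact this.2.2.2.2
        have hii' : i = i' := by
          rw [h1, hy] at hGadj
          rcases a with b1 | a1 <;> rcases c with b2 | a2 <;>
            simp_all [G, ConstructionGraph] <;> tauto
        rw [hii']
        exact ih i' j c b hy h2
  have h01 : (0 : Fin (m+2)) = 1 := by
    refine inv (hcon.preconnected ⟨Sum.inr (0, Sum.inl ⟨0, by omega⟩), hmem _ _⟩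
      ⟨Sum.inr (1, Sum.inl ⟨0, by omega⟩), hmem _ _⟩) 0 1 _ _ rfl rfl
  simp [Fin.ext_iff] at h01

/-- witness independent set: all B sides -/
lemma indep_witness (hm : 1 ≤ m) :
    ∃ s : Set (CGV m), (∀ a ∈ s, ∀ b ∈ s, ¬ (ConstructionGraph m).Adj a b) ∧
      s.ncard = (2 * m + 1) * (m + 2) := by
  classical
  refine ⟨Set.range (fun q : Fin (m + 2) × Fin (2 * m + 1) =>
    (Sum.inr (q.1, Sum.inl q.2) : CGV m)), ?_, ?_⟩
  · rintro x ⟨⟨i, b⟩, rfl⟩ y ⟨⟨i', b'⟩, rfl⟩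
    simp [ConstructionGraph]
  · rw [← Set.image_univ, Set.ncard_image_of_injective _
      (fun q q' hq => by
        simp only [Sum.inr.injEq, Prod.mk.injEq, Sum.inl.injEq] at hq
        exact Prod.ext hq.1 hq.2),
      Set.ncard_univ, Nat.card_eq_fintype_card]
    simp [Fintype.card_prod]
    ring

lemma indep_upper (hm : 1 ≤ m) {s : Set (CGV m)}
    (hind : ∀ a ∈ s, ∀ b ∈ s, ¬ (ConstructionGraph m).Adj a b) :
    s.ncard ≤ (2 * m + 1) * (m + 2) := by
  classical
  rw [Set.ncard_eq_toFinset_card']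
  set F := s.toFinset with hF
  have hmem : ∀ x, x ∈ F ↔ x ∈ s := by intro x; simp [hF]
  have hsum : F.card = ∑ j : Option (Fin (m + 2)),
      (F.filter (fun x => pIdx x = j)).card :=
    Finset.card_eq_sum_card_fiberwise (fun x _ => Finset.mem_univ (pIdx x))
  have hnone : (F.filter (fun x => pIdx x = none)).card ≤ m := by
    refine le_trans (Finset.card_le_card_of_injOn
      (fun x => Sum.elim id (fun _ => (⟨0, hm⟩ : Fin m)) x)
      (fun a _ => Finset.mem_univ _) ?_) (by simp)
    intro x hx y hy hxy
    simp only [Finset.coe_filter, Set.mem_setOf_eq] at hx hy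
    rcases x with sx | px
    · rcases y with sy | py
      · simpa using hxy
      · exact absurd hy.2 (by simp [pIdx])
    · exact absurd hx.2 (by simp [pIdx])
  -- case analysis on whether s contains a left vertex
  by_cases hS : ∃ st : Fin m, Sum.inl st ∈ F
  · -- fibers at most m+1
    obtain ⟨st, hst⟩ := hS
    have hfib : ∀ i : Fin (m + 2), (F.filter (fun x => pIdx x = some i)).card ≤ m + 1 := by
      intro i
      by_cases hA : ∃ a : Fin m, (Sum.inr (i, Sum.inr a) : CGV m) ∈ F
      · -- all fiber elements are A vertices
        obtain ⟨a0, ha0⟩ := hA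
        refine le_trans (Finset.card_le_card_of_injOn
          (fun x => Sum.elim (fun _ => (⟨0, hm⟩ : Fin m))
            (fun p => Sum.elim (fun _ => (⟨0, hm⟩ : Fin m)) id p.2) x)
          (fun x _ => Finset.mem_univ _) ?_) (by
          have : (Finset.univ : Finset (Fin m)).card = m := by simp
          omega)
        intro x hx y hy hxy
        simp only [Finset.coe_filter, Set.mem_setOf_eq] at hx hy
        have hshape : ∀ z : CGV m, z ∈ F → pIdx z = some i →
            ∃ a : Fin m, z = Sum.inr (i, Sum.inr a) := by
          rintro (sz | ⟨iz, bz | az⟩) hz hpz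
          · simp [pIdx] at hpz
          · exfalso
            have hiz : iz = i := by simpa [pIdx] using hpz
            subst hiz
            exact hind _ ((hmem _).1 hz) _ ((hmem _).1 ha0) (adj_B_A iz bz a0)
          · have hiz : iz = i := by simpa [pIdx] using hpz
            exact ⟨az, by rw [hiz]⟩
        obtain ⟨ax, rfl⟩ := hshape x hx.1 hx.2
        obtain ⟨ay, rfl⟩ := hshape y hy.1 hy.2
        simpa using hxy
      · -- all fiber elements are non-special B vertices
        push_neg at hA
        refine le_trans (Finset.card_le_card_of_injOn
          (fun x => Sum.elim (fun _ => (⟨0, by omega⟩ : Fin (m + 1)))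
            (fun p : Fin (m+2) × (Fin (2*m+1) ⊕ Fin m) =>
              Sum.elim (fun b : Fin (2 * m + 1) =>
                (⟨((b : ℕ) - m) % (m + 1), Nat.mod_lt _ (by omega)⟩ :
              Fin (m + 1))) (fun _ => (⟨0, by omega⟩ : Fin (m + 1))) p.2) x)
          (fun x _ => Finset.mem_univ _) ?_) (by simp)
        intro x hx y hy hxy
        simp only [Finset.coe_filter, Set.mem_setOf_eq] at hx hy
        have hshape : ∀ z : CGV m, z ∈ F → pIdx z = some i →
            ∃ b : Fin (2 * m + 1), m ≤ (b : ℕ) ∧ z = Sum.inr (i, Sum.inl b) := by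
          rintro (sz | ⟨iz, bz | az⟩) hz hpz
          · simp [pIdx] at hpz
          · have hiz : iz = i := by simpa [pIdx] using hpz
            subst hiz
            refine ⟨bz, ?_, rfl⟩
            by_contra hlt
            push_neg at hlt
            exact hind _ ((hmem _).1 hst) _ ((hmem _).1 hz) (adj_S_t hm st iz hlt)
          · exfalso
            have hiz : iz = i := by simpa [pIdx] using hpz
            subst hiz
            exact hA az hz
        obtain ⟨bx, hbx, rfl⟩ := hshape x hx.1 hx.2
        obtain ⟨by', hby, rfl⟩ := hshape y hy.1 hy.2
        simp only [Sum.elim_inl, Sum.elim_inr, Fin.mk.injEq] at hxy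
        have hx1 : ((bx : ℕ) - m) % (m + 1) = (bx : ℕ) - m := Nat.mod_eq_of_lt (by omega)
        have hy1 : ((by' : ℕ) - m) % (m + 1) = (by' : ℕ) - m := Nat.mod_eq_of_lt (by omega)
        rw [hx1, hy1] at hxy
        have : bx = by' := Fin.ext (by omega)
        rw [this]
    rw [Fintype.sum_option] at hsum
    have hb : ∑ i : Fin (m + 2), (F.filter (fun x => pIdx x = some i)).card
        ≤ (m + 2) * (m + 1) := by
      refine le_trans (Finset.sum_le_sum fun i _ => hfib i) ?_
      rw [Finset.sum_const, Finset.card_univ, Fintype.card_fin, smul_eq_mul]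
    have : F.card ≤ m + (m + 2) * (m + 1) := by omega
    nlinarith
  · -- no left vertices at all
    push_neg at hS
    have hnone0 : (F.filter (fun x => pIdx x = none)).card = 0 := by
      rw [Finset.card_eq_zero, Finset.filter_eq_empty_iff]
      rintro (sx | px) hx
      · exact absurd hx (hS sx)
      · simp [pIdx]
    have hfib : ∀ i : Fin (m + 2), (F.filter (fun x => pIdx x = some i)).card ≤ 2 * m + 1 := by
      intro i
      by_cases hA : ∃ a : Fin m, (Sum.inr (i, Sum.inr a) : CGV m) ∈ F
      · obtain ⟨a0, ha0⟩ := hA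
        refine le_trans (Finset.card_le_card_of_injOn
          (fun x => Sum.elim (fun _ => (⟨0, hm⟩ : Fin m))
            (fun p => Sum.elim (fun _ => (⟨0, hm⟩ : Fin m)) id p.2) x)
          (fun x _ => Finset.mem_univ _) ?_) (by
          have : (Finset.univ : Finset (Fin m)).card = m := by simp
          omega)
        intro x hx y hy hxy
        simp only [Finset.coe_filter, Set.mem_setOf_eq] at hx hy
        have hshape : ∀ z : CGV m, z ∈ F → pIdx z = some i →
            ∃ a : Fin m, z = Sum.inr (i, Sum.inr a) := by
          rintro (sz | ⟨iz, bz | az⟩) hz hpz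
          · simp [pIdx] at hpz
          · exfalso
            have hiz : iz = i := by simpa [pIdx] using hpz
            subst hiz
            exact hind _ ((hmem _).1 hz) _ ((hmem _).1 ha0) (adj_B_A iz bz a0)
          · have hiz : iz = i := by simpa [pIdx] using hpz
            exact ⟨az, by rw [hiz]⟩
        obtain ⟨ax, rfl⟩ := hshape x hx.1 hx.2
        obtain ⟨ay, rfl⟩ := hshape y hy.1 hy.2
        simpa using hxy
      · push_neg at hA
        refine le_trans (Finset.card_le_card_of_injOn
          (fun x => Sum.elim (fun _ => (⟨0, by omega⟩ : Fin (2 * m + 1)))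
            (fun p : Fin (m+2) × (Fin (2*m+1) ⊕ Fin m) =>
              Sum.elim id (fun _ => (⟨0, by omega⟩ : Fin (2 * m + 1))) p.2) x)
          (fun x _ => Finset.mem_univ _) ?_) (by simp)
        intro x hx y hy hxy
        simp only [Finset.coe_filter, Set.mem_setOf_eq] at hx hy
        have hshape : ∀ z : CGV m, z ∈ F → pIdx z = some i →
            ∃ b : Fin (2 * m + 1), z = Sum.inr (i, Sum.inl b) := by
          rintro (sz | ⟨iz, bz | az⟩) hz hpz
          · simp [pIdx] at hpz
          · have hiz : iz = i := by simpa [pIdx] using hpz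
            exact ⟨bz, by rw [hiz]⟩
          · exfalso
            have hiz : iz = i := by simpa [pIdx] using hpz
            subst hiz
            exact hA az hz
        obtain ⟨bx, rfl⟩ := hshape x hx.1 hx.2
        obtain ⟨by', rfl⟩ := hshape y hy.1 hy.2
        simpa using hxy
    rw [Fintype.sum_option] at hsum
    have hb : ∑ i : Fin (m + 2), (F.filter (fun x => pIdx x = some i)).card
        ≤ (m + 2) * (2 * m + 1) := by
      refine le_trans (Finset.sum_le_sum fun i _ => hfib i) ?_
      rw [Finset.sum_const, Finset.card_univ, Fintype.card_fin, smul_eq_mul]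
    have : F.card ≤ 0 + (m + 2) * (2 * m + 1) := by omega
    nlinarith


lemma m_lt_card : m < Nat.card (CGV m) := by
  have h : Nat.card (CGV m) = m + (m + 2) * ((2 * m + 1) + m) := by
    simp [Nat.card_eq_fintype_card]
  have h2 : 0 < (m + 2) * ((2 * m + 1) + m) := by positivity
  omega

lemma kappa_eq (hm : 1 ≤ m) : kappa (ConstructionGraph m) = m := by
  have hKm : IsKConnected (ConstructionGraph m) m :=
    ⟨m_lt_card, fun S h => delete_connected hm h⟩
  have hub : ∀ k ∈ {k | IsKConnected (ConstructionGraph m) k}, k ≤ m := by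
    intro k hk
    by_contra h
    push_neg at h
    exact not_delete_connected hm (hk.2 _ (by rw [ncard_range_inl]; exact h))
  exact le_antisymm (csSup_le ⟨m, hKm⟩ hub) (le_csSup ⟨m, hub⟩ hKm)

lemma indepNum_eq (hm : 1 ≤ m) :
    _root_.indepNum (ConstructionGraph m) = (2 * m + 1) * (m + 2) := by
  have hmem : (2 * m + 1) * (m + 2) ∈
      {n | ∃ s : Set (CGV m), (∀ a ∈ s, ∀ b ∈ s, ¬ (ConstructionGraph m).Adj a b) ∧
        s.ncard = n} := by
    obtain ⟨s, h1, h2⟩ := indep_witness hm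
    exact ⟨s, h1, h2⟩
  have hub : ∀ n ∈ {n | ∃ s : Set (CGV m),
      (∀ a ∈ s, ∀ b ∈ s, ¬ (ConstructionGraph m).Adj a b) ∧ s.ncard = n},
      n ≤ (2 * m + 1) * (m + 2) := by
    rintro n ⟨s, hind, rfl⟩
    exact indep_upper hm hind
  exact le_antisymm (csSup_le ⟨_, hmem⟩ hub) (le_csSup ⟨_, hub⟩ hmem)

lemma no_SGC (hm : 1 ≤ m) : ¬ HasSGC (ConstructionGraph m) := by
  rintro ⟨T, hTG, hTree, u, v, p, hpath, hbr⟩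
  have hc : T.Connected := hTree.isConnected
  have hbranch := fun i => exists_branch_in_piece hm hTG hc i
  choose a ha using hbranch
  have hpieces : ∀ i : Fin (m + 2), some i ∈ piecesOf p.support := by
    intro i
    simp only [piecesOf, Finset.mem_erase]
    refine ⟨by simp, ?_⟩
    rw [List.mem_toFinset]
    exact List.mem_map.2 ⟨_, hbr _ (ha i), rfl⟩
  have hcard : m + 2 ≤ (piecesOf p.support).card := by
    have hsub : Finset.univ.image (fun i : Fin (m + 2) => (some i : Option (Fin (m + 2))))
        ⊆ piecesOf p.support := by
      intro x hx
      simp only [Finset.mem_image, Finset.mem_univ, true_and] at hx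
      obtain ⟨i, rfl⟩ := hx
      exact hpieces i
    have := Finset.card_le_card hsub
    rwa [Finset.card_image_of_injective _ (Option.some_injective _), Finset.card_univ,
      Fintype.card_fin] at this
  have hinl : inlCnt p.support ≤ m := by
    have hnd : (p.support.filter (fun x => x.isLeft)).Nodup :=
      hpath.support_nodup.filter _
    have hsub : (p.support.filter (fun x => x.isLeft)).toFinset
        ⊆ Finset.univ.image (Sum.inl : Fin m → CGV m) := by
      intro x hx
      rw [List.mem_toFinset, List.mem_filter] at hx
      rcases x with s | p'
      · simp
      · simp at hx
    have h1 := Finset.card_le_card hsub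
    rw [List.toFinset_card_of_nodup hnd, Finset.card_image_of_injective _ Sum.inl_injective,
      Finset.card_univ, Fintype.card_fin] at h1
    exact h1
  have hwb := walk_pieces_bound hTG p
  split at hwb <;> omega

/-- For every positive integer `m` there is a connected graph with independence number
`(2m+1)(m+2)` and connectivity `m` having no spanning generalized caterpillar. -/
theorem stmt11 (m : ℕ) (hm : 1 ≤ m) :
    ∃ (V : Type) (G : SimpleGraph V), Finite V ∧ G.Connected ∧
      _root_.indepNum G = (2 * m + 1) * (m + 2) ∧ kappa G = m ∧ ¬ HasSGC G := by
  exact ⟨CGV m, ConstructionGraph m, Finite.of_fintype _, construction_connected hm,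
    indepNum_eq hm, kappa_eq hm, no_SGC hm⟩
end

section
/- In the graph G of the construction (m+2 copies of K_{2m+1,m} each attached to a common independent set S of size m via m chosen vertices from their large parts), if T is a spanning generalized caterpillar of G with branch-vertex set P, then for each i the copy G_i intersects P nontrivially. -/
open SimpleGraph

open Finset in

lemma aux_card_le {X : Type*} [Fintype X] [DecidableEq X] (H : SimpleGraph X)
    [DecidableRel H.Adj] :
    Fintype.card X ≤ H.edgeFinset.card + Fintype.card H.ConnectedComponent := by
  classical
  set rep : X → X := fun v => (H.connectedComponentMk v).out with hrep
  have hmk : ∀ v : X, H.connectedComponentMk (rep v) = H.connectedComponentMk v := by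
    intro v; exact Quot.out_eq _
  have hreach : ∀ v, H.Reachable v (rep v) := by
    intro v; exact (SimpleGraph.ConnectedComponent.eq.mp (hmk v)).symm
  have hcongr : ∀ a b : X, H.Reachable a b → rep a = rep b := by
    intro a b hab
    have : H.connectedComponentMk a = H.connectedComponentMk b :=
      SimpleGraph.ConnectedComponent.eq.mpr hab
    simp only [hrep, this]
  choose p hp using fun v => (hreach v).exists_walk_length_eq_dist
  have hsplit := Finset.card_filter_add_card_filter_not
    (s := (Finset.univ : Finset X)) (p := fun v => rep v = v)
  have h1 : (Finset.univ.filter (fun v => rep v = v)).card ≤ Fintype.card H.ConnectedComponent := by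
    rw [← Finset.card_univ]
    apply Finset.card_le_card_of_injOn (fun v => H.connectedComponentMk v)
      (fun _ _ => Finset.mem_univ _)
    intro a ha b hb hab
    simp only [Finset.coe_filter, Set.mem_setOf_eq] at ha hb
    have : rep a = rep b := by simp only [hrep, hab]
    rw [← ha.2, ← hb.2, this]
  have h2 : (Finset.univ.filter (fun v => ¬ rep v = v)).card ≤ H.edgeFinset.card := by
    apply Finset.card_le_card_of_injOn (fun v => s(v, (p v).getVert 1))
    · intro v hv
      simp only [Finset.coe_filter, Set.mem_setOf_eq] at hv
      have hne : v ≠ rep v := fun h => hv.2 h.symm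
      have hnil : ¬ (p v).Nil := SimpleGraph.Walk.not_nil_of_ne hne
      rw [Finset.mem_coe, SimpleGraph.mem_edgeFinset]
      exact (SimpleGraph.Walk.adj_snd hnil : H.Adj v ((p v).getVert 1))
    · intro a ha b hb hab
      simp only [Finset.coe_filter, Set.mem_setOf_eq] at ha hb
      have hnea : a ≠ rep a := fun h => ha.2 h.symm
      have hneb : b ≠ rep b := fun h => hb.2 h.symm
      have hnila : ¬ (p a).Nil := SimpleGraph.Walk.not_nil_of_ne hnea
      have hnilb : ¬ (p b).Nil := SimpleGraph.Walk.not_nil_of_ne hneb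
      rw [Sym2.eq_iff] at hab
      rcases hab with ⟨h1, h2⟩ | ⟨h1, h2⟩
      · exact h1
      · exfalso
        have hadj : H.Adj a b := h2 ▸ (SimpleGraph.Walk.adj_snd hnila : H.Adj a ((p a).getVert 1))
        have hrr : rep a = rep b := hcongr a b hadj.reachable
        have hda : H.dist b (rep a) + 1 ≤ H.dist a (rep a) := by
          have ht : H.dist ((p a).getVert 1) (rep a) ≤ (p a).tail.length :=
            SimpleGraph.dist_le _
          have he : H.dist ((p a).getVert 1) (rep a) = H.dist b (rep a) := by rw [h2]
          rw [he] at ht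
          have h3 := SimpleGraph.Walk.length_tail_add_one hnila
          have h4 := hp a
          omega
        have hdb : H.dist a (rep b) + 1 ≤ H.dist b (rep b) := by
          have ht : H.dist ((p b).getVert 1) (rep b) ≤ (p b).tail.length :=
            SimpleGraph.dist_le _
          have he : H.dist ((p b).getVert 1) (rep b) = H.dist a (rep b) := by rw [← h1]
          rw [he] at ht
          have h3 := SimpleGraph.Walk.length_tail_add_one hnilb
          have h4 := hp b
          omega
        rw [hrr] at hda
        omega
  rw [Finset.card_univ] at hsplit
  omega

/-- In the construction graph, every copy `G_i` contains a branch vertex of any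
spanning generalized caterpillar. -/
theorem stmt12 (m : ℕ) (hm : 1 ≤ m)
    (T : SimpleGraph (Fin m ⊕ (Fin (m + 2) × (Fin (2 * m + 1) ⊕ Fin m))))
    (hT : IsSGCof (ConstructionGraph m) T) (i : Fin (m + 2)) :
    ∃ x : Fin (2 * m + 1) ⊕ Fin m, Sum.inr (i, x) ∈ branchVerts T := by
  classical
  obtain ⟨hle, htree, -⟩ := hT
  by_contra hcon
  push_neg at hcon
  have hdeg : ∀ x : Fin (2 * m + 1) ⊕ Fin m,
      (T.neighborSet (Sum.inr (i, x))).ncard ≤ 2 := by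
    intro x
    have := hcon x
    simpa [branchVerts] using this
  set F : SimpleGraph (Fin (2 * m + 1) ⊕ Fin m) :=
    { Adj := fun x y => T.Adj (Sum.inr (i, x)) (Sum.inr (i, y))
      symm := ⟨fun x y h => T.adj_symm h⟩
      loopless := ⟨fun x h => T.irrefl h⟩ } with hF
  -- structural facts about T edges inside/leaving the copy
  have hBB : ∀ b b' : Fin (2 * m + 1), ¬ F.Adj (Sum.inl b) (Sum.inl b') := by
    intro b b' h
    have h' := hle h
    rw [ConstructionGraph, SimpleGraph.fromRel_adj] at h'
    rcases h' with ⟨-, h' | h'⟩ <;> exact h'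
  have hAA : ∀ a a' : Fin m, ¬ F.Adj (Sum.inr a) (Sum.inr a') := by
    intro a a' h
    have h' := hle h
    rw [ConstructionGraph, SimpleGraph.fromRel_adj] at h'
    rcases h' with ⟨-, h' | h'⟩ <;> exact h'
  have hSedge : ∀ (x : Fin (2 * m + 1) ⊕ Fin m) (s : Fin m),
      T.Adj (Sum.inr (i, x)) (Sum.inl s) →
      ∃ b : Fin (2 * m + 1), (b : ℕ) < m ∧ x = Sum.inl b := by
    intro x s h
    have h' := hle h
    rw [ConstructionGraph, SimpleGraph.fromRel_adj] at h'
    rcases h' with ⟨-, h' | h'⟩ <;> rcases x with b | a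
    · exact h'.elim
    · exact h'.elim
    · exact ⟨b, h', rfl⟩
    · exact h'.elim
  have hcross : ∀ (x z : Fin (2 * m + 1) ⊕ Fin m) (j : Fin (m + 2)),
      T.Adj (Sum.inr (i, x)) (Sum.inr (j, z)) → j = i := by
    intro x z j h
    have h' := hle h
    rw [ConstructionGraph, SimpleGraph.fromRel_adj] at h'
    rcases h' with ⟨-, h' | h'⟩ <;> rcases x with b | a <;> rcases z with b' | a' <;>
      first | exact h'.elim | exact h'.symm | exact h'
  -- degree bound on the A-side of F
  have hdegA : ∀ a : Fin m, F.degree (Sum.inr a) ≤ 2 := by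
    intro a
    have hsub : (fun x => (Sum.inr (i, x) : Fin m ⊕ (Fin (m + 2) × (Fin (2 * m + 1) ⊕ Fin m)))) ''
        F.neighborSet (Sum.inr a) ⊆ T.neighborSet (Sum.inr (i, Sum.inr a)) := by
      rintro _ ⟨x, hx, rfl⟩; exact hx
    have hinj : Function.Injective
        (fun x => (Sum.inr (i, x) : Fin m ⊕ (Fin (m + 2) × (Fin (2 * m + 1) ⊕ Fin m)))) := by
      intro x y h; simpa using h
    have h1 := Set.ncard_le_ncard hsub (Set.toFinite _)
    rw [Set.ncard_image_of_injective _ hinj] at h1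
    have h2 := hdeg (Sum.inr a)
    have h3 : F.degree (Sum.inr a) = (F.neighborSet (Sum.inr a)).ncard := by
      rw [← SimpleGraph.card_neighborFinset_eq_degree, SimpleGraph.neighborFinset_def,
        Set.ncard_eq_toFinset_card']
    omega
  -- edge bound
  have hedge : F.edgeFinset.card ≤ 2 * m := by
    have hsub : F.edgeFinset ⊆ Finset.univ.biUnion
        (fun a : Fin m => F.incidenceFinset (Sum.inr a)) := by
      intro e he
      rw [SimpleGraph.mem_edgeFinset] at he
      induction e with
      | h x y =>
        rcases x with b | a <;> rcases y with b' | a'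
        · exact absurd he (hBB b b')
        · refine Finset.mem_biUnion.mpr ⟨a', Finset.mem_univ _, ?_⟩
          rw [SimpleGraph.mem_incidenceFinset]
          exact ⟨he, by simp⟩
        · refine Finset.mem_biUnion.mpr ⟨a, Finset.mem_univ _, ?_⟩
          rw [SimpleGraph.mem_incidenceFinset]
          exact ⟨he, by simp⟩
        · exact absurd he (hAA a a')
    calc F.edgeFinset.card ≤ _ := Finset.card_le_card hsub
      _ ≤ ∑ a : Fin m, (F.incidenceFinset (Sum.inr a)).card := Finset.card_biUnion_le
      _ ≤ ∑ _a : Fin m, 2 := by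
          refine Finset.sum_le_sum fun a _ => ?_
          rw [SimpleGraph.card_incidenceFinset_eq_degree]
          exact hdegA a
      _ = 2 * m := by simp [mul_comm]
  -- every vertex of F reaches a t-vertex
  have hkey : ∀ x : Fin (2 * m + 1) ⊕ Fin m,
      ∃ b : Fin (2 * m + 1), (b : ℕ) < m ∧ F.Reachable x (Sum.inl b) := by
    intro x
    obtain ⟨w⟩ := htree.isConnected (Sum.inr (i, x)) (Sum.inl ⟨0, hm⟩)
    clear hcon
    suffices H : ∀ (u t : Fin m ⊕ (Fin (m + 2) × (Fin (2 * m + 1) ⊕ Fin m)))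
        (w : T.Walk u t), (∃ s : Fin m, t = Sum.inl s) →
        ∀ x : Fin (2 * m + 1) ⊕ Fin m,
        u = Sum.inr (i, x) → ∃ b : Fin (2 * m + 1), (b : ℕ) < m ∧ F.Reachable x (Sum.inl b) by
      exact H _ _ w ⟨⟨0, hm⟩, rfl⟩ x rfl
    intro u t w
    induction w with
    | nil =>
      rintro ⟨s, rfl⟩ x hx
      simp at hx
    | @cons u v _ h w ih =>
      rintro hs x hx
      subst hx
      rcases v with s | ⟨j, z⟩
      · obtain ⟨b, hb, rfl⟩ := hSedge x s h
        exact ⟨b, hb, SimpleGraph.Reachable.refl _⟩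
      · obtain rfl := hcross x z j h
        obtain ⟨b, hb, hr⟩ := ih hs z rfl
        exact ⟨b, hb, SimpleGraph.Reachable.trans (SimpleGraph.Adj.reachable h) hr⟩
  -- component bound
  have hcomp : Fintype.card F.ConnectedComponent ≤ m := by
    let g : F.ConnectedComponent → Fin m := fun c =>
      ⟨((hkey c.out).choose : ℕ), (hkey c.out).choose_spec.1⟩
    have hg : Function.Injective g := by
      intro c1 c2 hg12
      simp only [g, Fin.mk.injEq] at hg12
      have hb : (hkey c1.out).choose = (hkey c2.out).choose := Fin.ext hg12
      have e1 : F.connectedComponentMk c1.out = c1 := Quot.out_eq _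
      have e2 : F.connectedComponentMk c2.out = c2 := Quot.out_eq _
      rw [← e1, ← e2]
      rw [SimpleGraph.ConnectedComponent.eq.mpr (hkey c1.out).choose_spec.2,
        SimpleGraph.ConnectedComponent.eq.mpr (hkey c2.out).choose_spec.2, hb]
    have := Fintype.card_le_of_injective g hg
    simpa using this
  have hmain := aux_card_le F
  have hcard : Fintype.card (Fin (2 * m + 1) ⊕ Fin m) = 3 * m + 1 := by
    simp [Fintype.card_sum]; ring
  omega
end

section
/- The connectivity of the construction graph G of Theorem 2 with parameter m is exactly m. -/
open SimpleGraph

lemma survivor {α : Type*} [Finite α] {m : ℕ} {T : Set α} (h : T.ncard < m)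
    (f : Fin m → α) (hf : Function.Injective f) : ∃ j, f j ∉ T := by
  by_contra h'
  push_neg at h'
  have hsub : Set.range f ⊆ T := by rintro _ ⟨j, rfl⟩; exact h' j
  have := Set.ncard_le_ncard hsub (Set.toFinite T)
  rw [← Set.image_univ, Set.ncard_image_of_injective _ hf, Set.ncard_univ] at this
  simp at this
  omega

lemma coeAdj {V : Type*} {G : SimpleGraph V} {T : Set V}
    {u v : ↑((⊤ : G.Subgraph).deleteVerts T).verts} (h : G.Adj ↑u ↑v) :
    ((⊤ : G.Subgraph).deleteVerts T).coe.Adj u v := by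
  rw [Subgraph.coe_adj, Subgraph.deleteVerts_adj]
  exact ⟨Set.mem_univ _, u.2.2, Set.mem_univ _, v.2.2, h⟩

lemma adj_st {m : ℕ} (s : Fin m) (i : Fin (m+2)) (b : Fin (2*m+1)) (hb : (b:ℕ) < m) :
    (ConstructionGraph m).Adj (Sum.inl s) (Sum.inr (i, Sum.inl b)) := by
  rw [ConstructionGraph, fromRel_adj]
  exact ⟨by simp, Or.inl hb⟩

lemma adj_ba {m : ℕ} (i : Fin (m+2)) (b : Fin (2*m+1)) (a : Fin m) :
    (ConstructionGraph m).Adj (Sum.inr (i, Sum.inl b)) (Sum.inr (i, Sum.inr a)) := by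
  rw [ConstructionGraph, fromRel_adj]
  exact ⟨by simp, Or.inl rfl⟩

lemma adj_same_copy {m : ℕ} {i i' : Fin (m+2)} {x y}
    (h : (ConstructionGraph m).Adj (Sum.inr (i,x)) (Sum.inr (i',y))) : i = i' := by
  rw [ConstructionGraph, fromRel_adj] at h
  rcases h with ⟨-, h | h⟩ <;> rcases x with b|a <;> rcases y with b'|a' <;>
    first | exact h | exact h.symm | exact h.elim

lemma constr_m_conn (m : ℕ) (hm : 1 ≤ m) (T : Set (Fin m ⊕ (Fin (m + 2) × (Fin (2 * m + 1) ⊕ Fin m))))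
    (hT : T.ncard < m) : ((⊤ : (ConstructionGraph m).Subgraph).deleteVerts T).coe.Connected := by
  classical
  set G := ConstructionGraph m with hG
  set H := (⊤ : G.Subgraph).deleteVerts T with hH
  -- a surviving vertex of S
  obtain ⟨s0, hs0⟩ := survivor hT (Sum.inl : Fin m → _) Sum.inl_injective
  -- surviving t-vertices per copy
  have htb : ∀ i : Fin (m+2), ∃ b : Fin (2*m+1), (b:ℕ) < m ∧ Sum.inr (i, Sum.inl b) ∉ T := by
    intro i
    have hfin : ∀ j : Fin m, (j : ℕ) < 2*m+1 := fun j => by omega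
    have hinj : Function.Injective
        (fun j : Fin m => (Sum.inr (i, Sum.inl ⟨j, hfin j⟩) : Fin m ⊕ (Fin (m+2) × (Fin (2*m+1) ⊕ Fin m)))) := by
      intro a b hab
      simp only [Sum.inr.injEq, Prod.mk.injEq, Sum.inl.injEq, Fin.mk.injEq, true_and] at hab
      exact Fin.ext hab
    obtain ⟨j, hj⟩ := survivor hT _ hinj
    exact ⟨⟨j, hfin j⟩, j.2, hj⟩
  choose tb htbm htbT using htb
  -- surviving A-vertices per copy
  have haa : ∀ i : Fin (m+2), ∃ a : Fin m, Sum.inr (i, Sum.inr a) ∉ T := by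
    intro i
    exact survivor hT (fun a : Fin m => (Sum.inr (i, Sum.inr a) : Fin m ⊕ _))
      (by intro a b hab; simpa using hab)
  choose aa haaT using haa
  have memV : ∀ v, v ∉ T → v ∈ H.verts := fun v hv => ⟨Set.mem_univ _, hv⟩
  set S0 : ↑H.verts := ⟨Sum.inl s0, memV _ hs0⟩ with hS0
  have reach : ∀ u : ↑H.verts, H.coe.Reachable u S0 := by
    rintro ⟨x, hx⟩
    have hxT : x ∉ T := hx.2
    match x with
    | Sum.inl s =>
      have h1 : H.coe.Adj ⟨Sum.inl s, hx⟩ ⟨Sum.inr (0, Sum.inl (tb 0)), memV _ (htbT 0)⟩ :=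
        coeAdj (adj_st s 0 (tb 0) (htbm 0))
      have h2 : H.coe.Adj ⟨Sum.inr (0, Sum.inl (tb 0)), memV _ (htbT 0)⟩ S0 :=
        coeAdj (adj_st s0 0 (tb 0) (htbm 0)).symm
      exact h1.reachable.trans h2.reachable
    | Sum.inr (i, Sum.inl b) =>
      have h1 : H.coe.Adj ⟨Sum.inr (i, Sum.inl b), hx⟩ ⟨Sum.inr (i, Sum.inr (aa i)), memV _ (haaT i)⟩ :=
        coeAdj (adj_ba i b (aa i))
      have h2 : H.coe.Adj ⟨Sum.inr (i, Sum.inr (aa i)), memV _ (haaT i)⟩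
          ⟨Sum.inr (i, Sum.inl (tb i)), memV _ (htbT i)⟩ :=
        coeAdj (adj_ba i (tb i) (aa i)).symm
      have h3 : H.coe.Adj ⟨Sum.inr (i, Sum.inl (tb i)), memV _ (htbT i)⟩ S0 :=
        coeAdj (adj_st s0 i (tb i) (htbm i)).symm
      exact (h1.reachable.trans h2.reachable).trans h3.reachable
    | Sum.inr (i, Sum.inr a) =>
      have h2 : H.coe.Adj ⟨Sum.inr (i, Sum.inr a), hx⟩
          ⟨Sum.inr (i, Sum.inl (tb i)), memV _ (htbT i)⟩ :=
        coeAdj (adj_ba i (tb i) a).symm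
      have h3 : H.coe.Adj ⟨Sum.inr (i, Sum.inl (tb i)), memV _ (htbT i)⟩ S0 :=
        coeAdj (adj_st s0 i (tb i) (htbm i)).symm
      exact h2.reachable.trans h3.reachable
  exact { preconnected := fun u v => (reach u).trans (reach v).symm, nonempty := ⟨S0⟩ }
def copyIdx {m : ℕ} : (Fin m ⊕ (Fin (m+2) × (Fin (2*m+1) ⊕ Fin m))) → Fin (m+2)
  | Sum.inl _ => 0
  | Sum.inr (i, _) => i

lemma constr_disconn (m : ℕ) (hm : 1 ≤ m) :
    ¬ ((⊤ : (ConstructionGraph m).Subgraph).deleteVerts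
        (Set.range (Sum.inl : Fin m → _))).coe.Connected := by
  classical
  set S : Set (Fin m ⊕ (Fin (m + 2) × (Fin (2 * m + 1) ⊕ Fin m))) :=
    Set.range (Sum.inl : Fin m → _) with hS
  set H := (⊤ : (ConstructionGraph m).Subgraph).deleteVerts S with hH
  intro hc
  have memV : ∀ v, v ∉ S → v ∈ H.verts := fun v hv => ⟨Set.mem_univ _, hv⟩
  have h0 : (Sum.inr ((0 : Fin (m+2)), Sum.inl (0 : Fin (2*m+1))) : Fin m ⊕ _) ∉ S := by simp [hS]
  have h1 : (Sum.inr ((1 : Fin (m+2)), Sum.inl (0 : Fin (2*m+1))) : Fin m ⊕ _) ∉ S := by simp [hS]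
  set u0 : ↑H.verts := ⟨_, memV _ h0⟩
  set u1 : ↑H.verts := ⟨_, memV _ h1⟩
  obtain ⟨w⟩ := hc.preconnected u0 u1
  -- the copy index is invariant along walks
  have step : ∀ {a b : ↑H.verts}, H.coe.Adj a b → copyIdx a.1 = copyIdx b.1 := by
    rintro ⟨xa, hxa⟩ ⟨xb, hxb⟩ hab
    rw [Subgraph.coe_adj, Subgraph.deleteVerts_adj, Subgraph.top_adj] at hab
    obtain ⟨-, -, -, -, hadj⟩ := hab
    match xa, hxa, xb, hxb with
    | Sum.inl s, hxa, _, _ => exact absurd ⟨s, rfl⟩ hxa.2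
    | Sum.inr (i, x), hxa, Sum.inl s, hxb => exact absurd ⟨s, rfl⟩ hxb.2
    | Sum.inr (i, x), hxa, Sum.inr (i', y), hxb => exact adj_same_copy hadj
  have key : ∀ {a b : ↑H.verts} (w : H.coe.Walk a b), copyIdx a.1 = copyIdx b.1 := by
    intro a b w
    induction w with
    | nil => rfl
    | cons h p ih => exact (step h).trans ih
  have h01 : (0 : Fin (m+2)) = 1 := key w
  have := congrArg Fin.val h01
  simp at this

/-- The connectivity of the construction graph is exactly `m`. -/
theorem stmt17 (m : ℕ) (hm : 1 ≤ m) : kappa (ConstructionGraph m) = m := by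
  classical
  set G := ConstructionGraph m with hGdef
  have hcard : m < Nat.card (Fin m ⊕ (Fin (m + 2) × (Fin (2 * m + 1) ⊕ Fin m))) := by
    simp only [Nat.card_eq_fintype_card, Fintype.card_sum, Fintype.card_prod, Fintype.card_fin]
    nlinarith
  have hmem : IsKConnected G m := ⟨hcard, fun S hS => constr_m_conn m hm S hS⟩
  have hnot : ¬ IsKConnected G (m+1) := by
    rintro ⟨-, h2⟩
    have hcS : (Set.range (Sum.inl : Fin m → Fin m ⊕ (Fin (m + 2) × (Fin (2 * m + 1) ⊕ Fin m)))).ncard = m := by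
      rw [← Set.image_univ, Set.ncard_image_of_injective _ Sum.inl_injective, Set.ncard_univ]
      simp
    exact constr_disconn m hm (h2 _ (by rw [hcS]; omega))
  have hub : ∀ k ∈ {k | IsKConnected G k}, k ≤ m := by
    intro k hk
    by_contra hgt
    push_neg at hgt
    exact hnot ⟨lt_of_le_of_lt (by omega) hk.1, fun S hS => hk.2 S (by omega)⟩
  exact le_antisymm (csSup_le ⟨m, hmem⟩ hub) (le_csSup ⟨m, hub⟩ hmem)
end
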